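/- arXiv:1202.6097 — 4 statements merged into one kernel-verified Lean document; each statement's English description precedes it below -/
import Mathlib

section
/- Let H be a subgroup of the symmetric group Perm(Fin 5) on 5 letters with |H| = 4 such that the natural action of H on Fin 5 = {0,1,2,3,4} has exactly 3 orbits. Then H is conjugate in Perm(Fin 5) to the subgroup generated by the two transpositions (0 1) and (2 3). -/
open MulAction Equiv

lemma five_exhaust {a b c d e : Fin 5} (hab : a ≠ b) (hac : a ≠ c) (had : a ≠ d) (hae : a ≠ e)
    (hbc : b ≠ c) (hbd : b ≠ d) (hbe : b ≠ e) (hcd : c ≠ d) (hce : c ≠ e) (hde : d ≠ e)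
    (x : Fin 5) : x = a ∨ x = b ∨ x = c ∨ x = d ∨ x = e := by
  have hcard : ({a, b, c, d, e} : Finset (Fin 5)).card = 5 := by
    rw [Finset.card_insert_of_notMem (by simp [hab, hac, had, hae]),
      Finset.card_insert_of_notMem (by simp [hbc, hbd, hbe]),
      Finset.card_insert_of_notMem (by simp [hcd, hce]),
      Finset.card_insert_of_notMem (by simp [hde]), Finset.card_singleton]
  have := Finset.eq_univ_of_card _ hcard ▸ Finset.mem_univ x
  simpa using this

lemma vec_inj {a b c d e : Fin 5} (hab : a ≠ b) (hac : a ≠ c) (had : a ≠ d) (hae : a ≠ e)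
    (hbc : b ≠ c) (hbd : b ≠ d) (hbe : b ≠ e) (hcd : c ≠ d) (hce : c ≠ e) (hde : d ≠ e) :
    Function.Injective ![a, b, c, d, e] := by
  intro i j hij
  fin_cases i <;> fin_cases j <;> simp_all

lemma key_lemma (H : Subgroup (Equiv.Perm (Fin 5))) (hcard : Nat.card H = 4)
    (q1 q2 q3 : MulAction.orbitRel.Quotient H (Fin 5))
    (h12 : q1 ≠ q2) (h13 : q1 ≠ q3) (h23 : q2 ≠ q3)
    (n1 : Nat.card q1.orbit = 1) (n2 : Nat.card q2.orbit = 2) (n3 : Nat.card q3.orbit = 2) :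
    ∃ g : Equiv.Perm (Fin 5),
      Subgroup.map (MulAut.conj g).toMonoidHom H =
        Subgroup.closure
          ({Equiv.swap (0 : Fin 5) 1, Equiv.swap (2 : Fin 5) 3} : Set (Equiv.Perm (Fin 5))) := by
  classical
  rw [Nat.card_coe_set_eq] at n1 n2 n3
  obtain ⟨e, he⟩ := Set.ncard_eq_one.mp n1
  obtain ⟨a, b, hab, hq2⟩ := Set.ncard_eq_two.mp n2
  obtain ⟨c, d, hcd, hq3⟩ := Set.ncard_eq_two.mp n3
  -- membership & classes
  have hea : e ∈ q1.orbit := by rw [he]; exact rfl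
  have haa : a ∈ q2.orbit := by rw [hq2]; exact Set.mem_insert _ _
  have hbb : b ∈ q2.orbit := by rw [hq2]; exact Set.mem_insert_of_mem _ rfl
  have hcc : c ∈ q3.orbit := by rw [hq3]; exact Set.mem_insert _ _
  have hdd : d ∈ q3.orbit := by rw [hq3]; exact Set.mem_insert_of_mem _ rfl
  have cls : ∀ (x : Fin 5) (q : MulAction.orbitRel.Quotient H (Fin 5)),
      x ∈ q.orbit → Quotient.mk'' x = q := fun x q h =>
    MulAction.orbitRel.Quotient.mem_orbit.mp h
  have ne_of : ∀ (x y : Fin 5) (qa qb : MulAction.orbitRel.Quotient H (Fin 5)),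
      x ∈ qa.orbit → y ∈ qb.orbit → qa ≠ qb → x ≠ y := by
    intro x y qa qb hx hy hne hxy
    exact hne (by rw [← cls x qa hx, ← cls y qb hy, hxy])
  have hac : a ≠ c := ne_of a c q2 q3 haa hcc h23
  have had : a ≠ d := ne_of a d q2 q3 haa hdd h23
  have hae : a ≠ e := ne_of a e q2 q1 haa hea h12.symm
  have hbc : b ≠ c := ne_of b c q2 q3 hbb hcc h23
  have hbd : b ≠ d := ne_of b d q2 q3 hbb hdd h23
  have hbe : b ≠ e := ne_of b e q2 q1 hbb hea h12.symm
  have hce : c ≠ e := ne_of c e q3 q1 hcc hea h13.symm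
  have hde : d ≠ e := ne_of d e q3 q1 hdd hea h13.symm
  -- invariance of orbits
  have hstab : ∀ (h : Equiv.Perm (Fin 5)), h ∈ H → ∀ (x : Fin 5)
      (q : MulAction.orbitRel.Quotient H (Fin 5)), x ∈ q.orbit → h x ∈ q.orbit := by
    intro h hh x q hx
    have key : (⟨h, hh⟩ : H) • x ∈ q.orbit := by
      rw [MulAction.orbitRel.Quotient.mem_orbit] at hx ⊢
      rw [← hx]
      exact Quotient.sound' (MulAction.mem_orbit x (⟨h, hh⟩ : H))
    simpa using key
  -- classification of elements of H
  have hclass : ∀ h ∈ H, h = 1 ∨ h = Equiv.swap a b ∨ h = Equiv.swap c d ∨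
      h = Equiv.swap a b * Equiv.swap c d := by
    intro h hh
    have hhe : h e = e := by
      have := hstab h hh e q1 hea; rw [he] at this; simpa using this
    have hha : h a = a ∨ h a = b := by
      have := hstab h hh a q2 haa; rw [hq2] at this; simpa using this
    have hhb : h b = a ∨ h b = b := by
      have := hstab h hh b q2 hbb; rw [hq2] at this; simpa using this
    have hhc : h c = c ∨ h c = d := by
      have := hstab h hh c q3 hcc; rw [hq3] at this; simpa using this
    have hhd : h d = c ∨ h d = d := by
      have := hstab h hh d q3 hdd; rw [hq3] at this; simpa using this
    rcases hha with ha | ha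
    · have hb : h b = b := by
        rcases hhb with hb | hb
        · exact absurd (h.injective (hb.trans ha.symm)) hab.symm
        · exact hb
      rcases hhc with hc | hc
      · have hd : h d = d := by
          rcases hhd with hd | hd
          · exact absurd (h.injective (hd.trans hc.symm)) hcd.symm
          · exact hd
        left
        ext x
        rcases five_exhaust hab hac had hae hbc hbd hbe hcd hce hde x with rfl | rfl | rfl | rfl | rfl <;>
          simp [ha, hb, hc, hd, hhe]
      · have hd : h d = c := by
          rcases hhd with hd | hd
          · exact hd
          · exact absurd (h.injective (hc.trans hd.symm)) hcd
        right; right; left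
        ext x
        rcases five_exhaust hab hac had hae hbc hbd hbe hcd hce hde x with rfl | rfl | rfl | rfl | rfl <;>
          simp [ha, hb, hc, hd, hhe, Equiv.swap_apply_of_ne_of_ne, hac, had, hbc, hbd,
            Ne.symm hce, Ne.symm hde, swap_apply_left, swap_apply_right]
    · have hb : h b = a := by
        rcases hhb with hb | hb
        · exact hb
        · exact absurd (h.injective (ha.trans hb.symm)) hab
      rcases hhc with hc | hc
      · have hd : h d = d := by
          rcases hhd with hd | hd
          · exact absurd (h.injective (hd.trans hc.symm)) hcd.symm
          · exact hd
        right; left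
        ext x
        rcases five_exhaust hab hac had hae hbc hbd hbe hcd hce hde x with rfl | rfl | rfl | rfl | rfl <;>
          simp [ha, hb, hc, hd, hhe, Equiv.swap_apply_of_ne_of_ne, Ne.symm hac, Ne.symm hbc,
            Ne.symm had, Ne.symm hbd, Ne.symm hae, Ne.symm hbe, swap_apply_left, swap_apply_right]
      · have hd : h d = c := by
          rcases hhd with hd | hd
          · exact hd
          · exact absurd (h.injective (hc.trans hd.symm)) hcd
        right; right; right
        ext x
        rcases five_exhaust hab hac had hae hbc hbd hbe hcd hce hde x with rfl | rfl | rfl | rfl | rfl <;>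
          simp [ha, hb, hc, hd, hhe, Equiv.swap_apply_of_ne_of_ne, hac, had, hbc, hbd,
            Ne.symm hac, Ne.symm hbc, Ne.symm had, Ne.symm hbd, Ne.symm hae, Ne.symm hbe,
            Ne.symm hce, Ne.symm hde, swap_apply_left, swap_apply_right]
  -- H equals the four-element set
  set S : Set (Equiv.Perm (Fin 5)) :=
    {1, Equiv.swap a b, Equiv.swap c d, Equiv.swap a b * Equiv.swap c d} with hS
  have hHS : (H : Set (Equiv.Perm (Fin 5))) ⊆ S := by
    intro h hh
    rcases hclass h hh with rfl | rfl | rfl | rfl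
    · exact Set.mem_insert _ _
    · exact Set.mem_insert_of_mem _ (Set.mem_insert _ _)
    · exact Set.mem_insert_of_mem _ (Set.mem_insert_of_mem _ (Set.mem_insert _ _))
    · exact Set.mem_insert_of_mem _ (Set.mem_insert_of_mem _ (Set.mem_insert_of_mem _ rfl))
  have hS4 : S.ncard ≤ 4 := by
    calc S.ncard ≤ ({Equiv.swap a b, Equiv.swap c d, Equiv.swap a b * Equiv.swap c d} :
          Set (Equiv.Perm (Fin 5))).ncard + 1 := Set.ncard_insert_le _ _
      _ ≤ (({Equiv.swap c d, Equiv.swap a b * Equiv.swap c d} :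
          Set (Equiv.Perm (Fin 5))).ncard + 1) + 1 :=
        Nat.add_le_add_right (Set.ncard_insert_le _ _) 1
      _ ≤ ((({Equiv.swap a b * Equiv.swap c d} :
          Set (Equiv.Perm (Fin 5))).ncard + 1) + 1) + 1 :=
        Nat.add_le_add_right (Nat.add_le_add_right (Set.ncard_insert_le _ _) 1) 1
      _ = 4 := by rw [Set.ncard_singleton]
  have hHcard : (H : Set (Equiv.Perm (Fin 5))).ncard = 4 := by
    rw [← Nat.card_coe_set_eq]
    simpa using hcard
  have heq : (H : Set (Equiv.Perm (Fin 5))) = S :=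
    Set.eq_of_subset_of_ncard_le hHS (by omega) (Set.toFinite _)
  have hsab : Equiv.swap a b ∈ H := by
    rw [← SetLike.mem_coe, heq]
    exact Set.mem_insert_of_mem _ (Set.mem_insert _ _)
  have hscd : Equiv.swap c d ∈ H := by
    rw [← SetLike.mem_coe, heq]
    exact Set.mem_insert_of_mem _ (Set.mem_insert_of_mem _ (Set.mem_insert _ _))
  have HK : H = Subgroup.closure {Equiv.swap a b, Equiv.swap c d} := by
    apply le_antisymm
    · intro h hh
      rcases hclass h hh with rfl | rfl | rfl | rfl
      · exact one_mem _
      · exact Subgroup.subset_closure (Set.mem_insert _ _)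
      · exact Subgroup.subset_closure (Set.mem_insert_of_mem _ rfl)
      · exact mul_mem (Subgroup.subset_closure (Set.mem_insert _ _))
          (Subgroup.subset_closure (Set.mem_insert_of_mem _ rfl))
    · exact (Subgroup.closure_le _).mpr
        (Set.insert_subset hsab (Set.singleton_subset_iff.mpr hscd))
  -- conjugation
  let v : Fin 5 → Fin 5 := ![a, b, c, d, e]
  have hv : Function.Injective v :=
    vec_inj hab hac had hae hbc hbd hbe hcd hce hde
  let g0 : Equiv.Perm (Fin 5) := Equiv.ofBijective v (Finite.injective_iff_bijective.mp hv)
  have hg0a : g0.symm a = 0 := by rw [Equiv.symm_apply_eq]; simp [g0, v]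
  have hg0b : g0.symm b = 1 := by rw [Equiv.symm_apply_eq]; simp [g0, v]
  have hg0c : g0.symm c = 2 := by rw [Equiv.symm_apply_eq]; simp [g0, v]
  have hg0d : g0.symm d = 3 := by rw [Equiv.symm_apply_eq]; simp [g0, v]
  refine ⟨g0.symm, ?_⟩
  rw [HK, MonoidHom.map_closure]
  congr 1
  rw [Set.image_pair]
  have e1 : (MulAut.conj g0.symm).toMonoidHom (Equiv.swap a b) = Equiv.swap (0 : Fin 5) 1 := by
    rw [← hg0a, ← hg0b]
    simp [MulAut.conj_apply, ← Equiv.swap_apply_apply]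
  have e2 : (MulAut.conj g0.symm).toMonoidHom (Equiv.swap c d) = Equiv.swap (2 : Fin 5) 3 := by
    rw [← hg0c, ← hg0d]
    simp [MulAut.conj_apply, ← Equiv.swap_apply_apply]
  rw [e1, e2]

/-- A subgroup of `S₅` of order 4 whose natural action on the 5 points has exactly
3 orbits is conjugate to the subgroup generated by the transpositions `(0 1)` and `(2 3)`. -/
theorem stmt_8 (H : Subgroup (Equiv.Perm (Fin 5)))
    (hcard : Nat.card H = 4)
    (horb : Nat.card (MulAction.orbitRel.Quotient H (Fin 5)) = 3) :
    ∃ g : Equiv.Perm (Fin 5),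
      Subgroup.map (MulAut.conj g).toMonoidHom H =
        Subgroup.closure
          ({Equiv.swap (0 : Fin 5) 1, Equiv.swap (2 : Fin 5) 3} : Set (Equiv.Perm (Fin 5))) := by
  classical
  letI : Fintype (MulAction.orbitRel.Quotient H (Fin 5)) := Fintype.ofFinite _
  have hdvd : ∀ q : MulAction.orbitRel.Quotient H (Fin 5), Nat.card q.orbit ∣ 4 := by
    intro q
    rw [MulAction.orbitRel.Quotient.orbit_eq_orbit_out q Quotient.out_eq',
      Nat.card_eq_fintype_card, ← hcard, Nat.card_eq_fintype_card]
    exact ⟨_, (MulAction.card_orbit_mul_card_stabilizer_eq_card_group H q.out).symm⟩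
  have hpos : ∀ q : MulAction.orbitRel.Quotient H (Fin 5), 1 ≤ Nat.card q.orbit := by
    intro q
    have hne := Set.Nonempty.to_subtype (⟨q.out, MulAction.orbitRel.Quotient.mem_orbit.mpr (Quotient.out_eq' q)⟩ : q.orbit.Nonempty)
    exact Nat.one_le_iff_ne_zero.mpr (Nat.card_ne_zero.mpr ⟨hne, Set.toFinite _ |>.to_subtype⟩)
  have hsum : ∑ q : MulAction.orbitRel.Quotient H (Fin 5), Nat.card q.orbit = 5 := by
    have := Nat.card_congr (MulAction.selfEquivSigmaOrbits' H (Fin 5))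
    simp [Nat.card_eq_fintype_card, Fintype.card_sigma] at this
    simpa using this.symm
  have hQ : Fintype.card (MulAction.orbitRel.Quotient H (Fin 5)) = 3 := by
    rw [← Nat.card_eq_fintype_card]; exact horb
  obtain eQ := Fintype.equivFinOfCardEq hQ
  have h3 : Nat.card (eQ.symm 0).orbit + Nat.card (eQ.symm 1).orbit
      + Nat.card (eQ.symm 2).orbit = 5 := by
    have := (Fintype.sum_equiv eQ.symm
      (fun i => Nat.card (eQ.symm i).orbit)
      (fun q => Nat.card q.orbit) fun i => rfl).trans hsum
    rwa [Fin.sum_univ_three] at this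
  have hval : ∀ i : Fin 3, Nat.card (eQ.symm i).orbit = 1 ∨
      Nat.card (eQ.symm i).orbit = 2 ∨ Nat.card (eQ.symm i).orbit = 4 := by
    intro i
    have h := hdvd (eQ.symm i)
    have hp := hpos (eQ.symm i)
    have hle := Nat.le_of_dvd (by norm_num) h
    interval_cases (Nat.card (eQ.symm i).orbit) <;> omega
  have ne01 : eQ.symm 0 ≠ eQ.symm 1 := eQ.symm.injective.ne (by decide)
  have ne02 : eQ.symm 0 ≠ eQ.symm 2 := eQ.symm.injective.ne (by decide)
  have ne12 : eQ.symm 1 ≠ eQ.symm 2 := eQ.symm.injective.ne (by decide)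
  rcases hval 0 with h0 | h0 | h0 <;> rcases hval 1 with h1 | h1 | h1 <;>
    rcases hval 2 with h2 | h2 | h2 <;>
    first
    | omega
    | exact key_lemma H hcard _ _ _ ne01 ne02 ne12 h0 h1 h2
    | exact key_lemma H hcard _ _ _ ne01.symm ne12 ne02 h1 h0 h2
    | exact key_lemma H hcard _ _ _ ne02.symm ne12.symm ne01 h2 h0 h1
end

section
/- Let g be a finite-dimensional Lie algebra over a field of characteristic 0 and let (e, h, f) be an sl₂-triple in g. Then g = [e, g] ⊕ z_g(f): the range of the adjoint operator ad(e) and the kernel of ad(f) are complementary linear subspaces of g. -/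
open Module LinearMap


section Identities
variable {k V : Type*} [Field k] [AddCommGroup V] [Module k V]

/-- `H * F^j = F^j * H - 2j • F^j`. -/
lemma sl2_HFj {F H : Module.End k V} (hHF : H * F - F * H = -((2:k) • F)) (j : ℕ) :
    H * F ^ j = F ^ j * H - ((2 * j : k)) • F ^ j := by
  have h1 : H * F = -((2:k)•F) + F * H := by rw [← hHF]; abel
  induction j with
  | zero => simp
  | succ j ih =>
    rw [pow_succ, ← mul_assoc, ih, sub_mul, smul_mul_assoc, mul_assoc, h1, mul_add, mul_neg,
      mul_smul_comm, ← mul_assoc]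
    push_cast
    module

/-- single-step shift for `F`. -/
lemma sl2_shiftF1 {F H : Module.End k V} (hHF : H * F - F * H = -((2:k) • F)) (μ : k) :
    (H - (μ - 2) • 1) * F = F * (H - μ • 1) := by
  have h1 : H * F = -((2:k)•F) + F * H := by rw [← hHF]; abel
  rw [sub_mul, smul_mul_assoc, one_mul, h1, mul_sub, mul_smul_comm, mul_one]
  module

/-- single-step shift for `E`. -/
lemma sl2_shiftE1 {E H : Module.End k V} (hHE : H * E - E * H = (2:k) • E) (μ : k) :
    (H - (μ + 2) • 1) * E = E * (H - μ • 1) := by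
  have h1 : H * E = (2:k)•E + E * H := by rw [← hHE]; abel
  rw [sub_mul, smul_mul_assoc, one_mul, h1, mul_sub, mul_smul_comm, mul_one]
  module

lemma sl2_shiftF {F H : Module.End k V} (hHF : H * F - F * H = -((2:k) • F)) (μ : k) (r : ℕ) :
    (H - (μ - 2) • 1) ^ r * F = F * (H - μ • 1) ^ r := by
  induction r with
  | zero => simp
  | succ r ih =>
    rw [pow_succ, mul_assoc, sl2_shiftF1 hHF, ← mul_assoc, ih, mul_assoc, ← pow_succ]

lemma sl2_shiftE {E H : Module.End k V} (hHE : H * E - E * H = (2:k) • E) (μ : k) (r : ℕ) :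
    (H - (μ + 2) • 1) ^ r * E = E * (H - μ • 1) ^ r := by
  induction r with
  | zero => simp
  | succ r ih =>
    rw [pow_succ, mul_assoc, sl2_shiftE1 hHE, ← mul_assoc, ih, mul_assoc, ← pow_succ]

lemma sl2_shiftEm {E H : Module.End k V} (hHE : H * E - E * H = (2:k) • E) (μ : k) (r : ℕ) :
    ∀ m : ℕ, (H - (μ + 2 * m) • 1) ^ r * E ^ m = E ^ m * (H - μ • 1) ^ r := by
  intro m
  induction m with
  | zero => simp
  | succ m ih =>
    have e1 : (μ + 2 * ((m+1 : ℕ) : k)) = ((μ + 2 * (m:ℕ)) + 2) := by push_cast; ring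
    rw [pow_succ', ← mul_assoc, e1, sl2_shiftE hHE (μ + 2 * (m:ℕ)), mul_assoc, ih, ← mul_assoc,
      ← pow_succ']

private lemma dist_sub {X H : Module.End k V} (c : k) : X * (H - c • 1) = X * H - c • X := by
  rw [mul_sub, mul_smul_comm, mul_one]

/-- `E * F^(j+1) = F^(j+1) * E + (j+1) • (F^j * (H - j•1))`. -/
lemma sl2_EFj {E F H : Module.End k V} (hEF : E * F - F * E = H)
    (hHF : H * F - F * H = -((2:k) • F)) (j : ℕ) :
    E * F ^ (j+1) = F ^ (j+1) * E + ((j+1 : ℕ) : k) • (F ^ j * (H - (j : k) • 1)) := by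
  have h1 : E * F = F * E + H := by rw [← hEF]; abel
  induction j with
  | zero => simpa using h1
  | succ j ih =>
    have h2 : (H - (j:k) • 1) * F = F * (H - ((j:k)+2) • 1) := by
      have := sl2_shiftF1 hHF ((j:k)+2); rw [add_sub_cancel_right] at this; rw [this]
    calc E * F ^ (j+2)
        = (E * F^(j+1)) * F := by rw [mul_assoc, ← pow_succ]
      _ = (F^(j+1)*E) * F + ((j+1:ℕ):k) • ((F^j * (H - (j:k)•1)) * F) := by
          rw [ih, add_mul, smul_mul_assoc]
      _ = F^(j+1)*(E*F) + ((j+1:ℕ):k) • (F^(j+1) * (H - ((j:k)+2)•1)) := by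
          rw [mul_assoc, mul_assoc, h2]
          simp only [← mul_assoc, ← pow_succ]
      _ = F^(j+2)*E + (F^(j+1)*H + ((j+1:ℕ):k) • (F^(j+1) * (H - ((j:k)+2)•1))) := by
          rw [h1, mul_add, ← mul_assoc, ← pow_succ]; abel
      _ = F^(j+2)*E + ((j+2:ℕ):k) • (F^(j+1) * (H - ((j+1:ℕ):k)•1)) := by
          rw [dist_sub, dist_sub]
          match_scalars <;> push_cast <;> ring

/-- the product `∏_{i<j} (H - i•1)`, as a recursively defined endomorphism. -/
def sl2P (H : Module.End k V) : ℕ → Module.End k V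
  | 0 => 1
  | (j+1) => sl2P H j * (H - (j : k) • 1)

lemma sl2_ker_H {E H : Module.End k V} (hHE : H * E - E * H = (2:k) • E) {w : V}
    (hw : E w = 0) : E (H w) = 0 := by
  have : (E * H) w = (H * E) w - ((2:k) • E) w := by rw [← hHE]; simp
  simpa [Module.End.mul_apply, hw] using this

lemma sl2_ker_sub {E H : Module.End k V} (hHE : H * E - E * H = (2:k) • E) {w : V} (c : k)
    (hw : E w = 0) : E ((H - c • 1) w) = 0 := by
  have h0 : E ((H - c • 1) w) = E (H w) - c • E w := by
    simp [LinearMap.sub_apply, LinearMap.smul_apply, map_sub, map_smul]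
  rw [h0, sl2_ker_H hHE hw, hw, smul_zero, sub_zero]

lemma sl2_prod {E F H : Module.End k V} (hEF : E * F - F * E = H)
    (hHE : H * E - E * H = (2:k) • E) (hHF : H * F - F * H = -((2:k) • F)) :
    ∀ (j : ℕ) (w : V), E w = 0 → (E ^ j * F ^ j) w = ((j.factorial : k)) • (sl2P H j) w := by
  intro j
  induction j with
  | zero => intro w _; simp [sl2P]
  | succ j ih =>
    intro w hw
    have h1 : (E ^ (j+1) * F ^ (j+1)) w = (E ^ j) ((E * F ^ (j+1)) w) := by
      rw [pow_succ, mul_assoc]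
      simp [Module.End.mul_apply]
    have h2 : (E * F ^ (j+1)) w = ((j+1 : ℕ) : k) • ((F ^ j) ((H - (j : k) • 1) w)) := by
      rw [sl2_EFj hEF hHF j]
      simp [Module.End.mul_apply, LinearMap.add_apply, LinearMap.smul_apply, hw]
    have hw' : E ((H - (j:k) • 1) w) = 0 := sl2_ker_sub hHE _ hw
    have h3 : (E ^ j * F ^ j) ((H - (j:k) • 1) w)
        = ((j.factorial : k)) • (sl2P H j) ((H - (j:k) • 1) w) := ih _ hw'
    rw [h1, h2, map_smul]
    have h4 : (E ^ j) ((F ^ j) ((H - (j:k) • 1) w)) = (E ^ j * F ^ j) ((H - (j:k) • 1) w) := by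
      simp [Module.End.mul_apply]
    rw [h4, h3, smul_smul, sl2P]
    have : ((j+1 : ℕ) : k) * (j.factorial : k) = ((j+1).factorial : k) := by
      rw [Nat.factorial_succ]; push_cast; ring
    rw [this]
    simp [Module.End.mul_apply]

lemma sl2P_eigen {H : Module.End k V} {c : k} {w : V} (hw : H w = c • w) (j : ℕ) :
    sl2P H j w = (∏ i ∈ Finset.range j, (c - (i:k))) • w := by
  induction j with
  | zero => simp [sl2P]
  | succ j ih =>
    have h1 : (H - (j:k) • 1) w = (c - (j:k)) • w := by
      simp [LinearMap.sub_apply, hw, sub_smul]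
    rw [sl2P, Module.End.mul_apply, h1, map_smul, ih, smul_smul, Finset.prod_range_succ, mul_comm]

/-- every eigenvector of `H` in `ker E` has eigenvalue a natural number `< N` where `F^N = 0`. -/
lemma sl2_eigen_bound {E F H : Module.End k V} [CharZero k] (hEF : E * F - F * E = H)
    (hHE : H * E - E * H = (2:k) • E) (hHF : H * F - F * H = -((2:k) • F))
    {N : ℕ} (hFN : F ^ N = 0) {w : V} (hw0 : w ≠ 0) (hEw : E w = 0) {c : k}
    (hHw : H w = c • w) : ∃ i : ℕ, i < N ∧ c = (i : k) := by
  have h1 : (E ^ N * F ^ N) w = 0 := by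
    rw [Module.End.mul_apply, hFN]; simp
  rw [sl2_prod hEF hHE hHF N w hEw, sl2P_eigen hHw] at h1
  rw [smul_smul, smul_eq_zero] at h1
  rcases h1 with h1 | h1
  · rcases mul_eq_zero.mp h1 with h2 | h2
    · exact absurd h2 (Nat.cast_ne_zero.mpr (Nat.factorial_ne_zero N))
    · obtain ⟨i, hi, hci⟩ := Finset.prod_eq_zero_iff.mp h2
      exact ⟨i, Finset.mem_range.mp hi, sub_eq_zero.mp hci⟩
  · exact absurd h1 hw0

lemma sl2_first_vanish {E H : Module.End k V} (hHE : H * E - E * H = (2:k) • E) :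
    ∀ (j : ℕ) (w : V), w ≠ 0 → E w = 0 → sl2P H j w = 0 →
      ∃ i : ℕ, i < j ∧ ∃ v : V, v ≠ 0 ∧ E v = 0 ∧ H v = (i : k) • v := by
  intro j
  induction j with
  | zero => intro w hw0 _ h; exact absurd (by simpa [sl2P] using h) hw0
  | succ j ih =>
    intro w hw0 hEw h
    rcases eq_or_ne ((H - (j:k) • 1) w) 0 with h1 | h1
    · refine ⟨j, Nat.lt_succ_self j, w, hw0, hEw, ?_⟩
      have := sub_eq_zero.mp (by simpa [LinearMap.sub_apply] using h1)
      simpa using this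
    · have h2 : sl2P H j ((H - (j:k) • 1) w) = 0 := by
        rw [sl2P, Module.End.mul_apply] at h; exact h
      obtain ⟨i, hij, hv⟩ := ih _ h1 (sl2_ker_sub hHE _ hEw) h2
      exact ⟨i, hij.trans (Nat.lt_succ_self j), hv⟩

end Identities

section Nilpotency
variable {k V : Type*} [Field k] [AddCommGroup V] [Module k V]

/-- From a nonzero generalized eigenvector, produce an honest eigenvector as an iterate. -/
lemma sl2_eigen_of_gen {H : Module.End k V} {μ : k} {x : V} (hx0 : x ≠ 0) {r : ℕ}
    (hx : ((H - μ • 1) ^ r) x = 0) :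
    ∃ s : ℕ, ((H - μ • 1) ^ s) x ≠ 0 ∧ H (((H - μ • 1) ^ s) x) = μ • ((H - μ • 1) ^ s) x := by
  classical
  have hex : ∃ m, ((H - μ • 1 : Module.End k V) ^ m) x = 0 := ⟨r, hx⟩
  set m := Nat.find hex with hm
  have hm0 : m ≠ 0 := by
    intro h
    have := Nat.find_spec hex
    rw [← hm, h, pow_zero] at this
    exact hx0 (by simpa using this)
  obtain ⟨s, hs⟩ : ∃ s, m = s + 1 := ⟨m - 1, (Nat.succ_pred_eq_of_pos (Nat.pos_of_ne_zero hm0)).symm⟩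
  refine ⟨s, ?_, ?_⟩
  · exact Nat.find_min hex (by omega)
  · have h1 : ((H - μ • 1) ^ (s+1)) x = 0 := by rw [← hs, hm]; exact Nat.find_spec hex
    rw [pow_succ'] at h1
    have h2 : (H - μ • 1) (((H - μ • 1) ^ s) x) = 0 := by
      simpa [Module.End.mul_apply] using h1
    have h3 := sub_eq_zero.mp (by simpa [LinearMap.sub_apply] using h2)
    simpa using h3

/-- An endomorphism `E` with `[H,E] = 2E` on a finite-dimensional space in char zero
is nilpotent, by base change this holds over any field; here: algebraically closed case. -/
lemma sl2_nilpotentE_aux {K W : Type*} [Field K] [IsAlgClosed K] [CharZero K] [AddCommGroup W]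
    [Module K W] [FiniteDimensional K W] (E H : Module.End K W)
    (hHE : H * E - E * H = (2:K) • E) : IsNilpotent E := by
  classical
  -- the set of locally nilpotent vectors forms a submodule
  let S : Submodule K W :=
    { carrier := {x | ∃ m, (E ^ m) x = 0}
      zero_mem' := ⟨0, by simp⟩
      add_mem' := by
        rintro a b ⟨ma, ha⟩ ⟨mb, hb⟩
        refine ⟨ma + mb, ?_⟩
        have h1 : (E ^ (ma + mb)) a = 0 := by
          rw [add_comm, pow_add, Module.End.mul_apply, ha, map_zero]
        have h2 : (E ^ (ma + mb)) b = 0 := by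
          rw [pow_add, Module.End.mul_apply, hb, map_zero]
        rw [map_add, h1, h2, add_zero]
      smul_mem' := by
        rintro c x ⟨m, hm⟩
        exact ⟨m, by rw [map_smul, hm, smul_zero]⟩ }
  have hS : ∀ μ : K, H.maxGenEigenspace μ ≤ S := by
    intro μ x hx
    obtain ⟨r, hr⟩ := (Module.End.mem_maxGenEigenspace H μ x).mp hx
    by_contra hcon
    have hx' : ∀ m, (E ^ m) x ≠ 0 := by
      intro m hm
      exact hcon ⟨m, hm⟩
    -- each `E^m x` is a nonzero generalized eigenvector with eigenvalue `μ + 2m`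
    have hgen : ∀ m : ℕ, ((H - (μ + 2 * m) • 1) ^ r) ((E ^ m) x) = 0 := by
      intro m
      have := congrArg (fun T : Module.End K W => T x) (sl2_shiftEm hHE μ r m)
      simpa [Module.End.mul_apply, hr] using this
    -- extract honest eigenvectors
    have hvec : ∀ m : ℕ, ∃ w : W, w ≠ 0 ∧ H w = (μ + 2 * m) • w := by
      intro m
      obtain ⟨s, hs0, hs1⟩ := sl2_eigen_of_gen (hx' m) (hgen m)
      exact ⟨_, hs0, hs1⟩
    choose w hw0 hw1 using hvec
    have hinj : Function.Injective (fun m : ℕ => μ + 2 * (m:K)) := by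
      intro a b hab
      simp only at hab
      have h2 : (2:K) * a = 2 * b := add_left_cancel hab
      have h3 : (a : K) = (b : K) := mul_left_cancel₀ (by norm_num) h2
      exact Nat.cast_injective h3
    have hli : LinearIndependent K w := by
      apply Module.End.eigenvectors_linearIndependent' H (fun m : ℕ => μ + 2 * (m:K)) hinj
      intro m
      exact ⟨Module.End.mem_eigenspace_iff.mpr (hw1 m), hw0 m⟩
    exact Module.Finite.not_linearIndependent_of_infinite w hli
  have hStop : S = ⊤ := top_unique (by
    rw [← Module.End.iSup_maxGenEigenspace_eq_top H]
    exact iSup_le hS)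
  -- extract a uniform exponent using a finite basis
  let b := Module.finBasis K W
  have hb : ∀ i, ∃ m, (E ^ m) (b i) = 0 := by
    intro i
    have : b i ∈ S := hStop ▸ Submodule.mem_top
    exact this
  choose m hm using hb
  refine ⟨Finset.univ.sup m, ?_⟩
  apply b.ext
  intro i
  have hle : m i ≤ Finset.univ.sup m := Finset.le_sup (Finset.mem_univ i)
  have : (E ^ (Finset.univ.sup m)) (b i) = 0 := by
    rw [← Nat.sub_add_cancel hle, pow_add, Module.End.mul_apply, hm, map_zero]
  simpa using this

/-- nilpotency over an arbitrary field of characteristic zero, via base change to the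
algebraic closure (transported through matrices). -/
lemma sl2_nilpotentE {k V : Type*} [Field k] [CharZero k] [AddCommGroup V] [Module k V]
    [FiniteDimensional k V] (E H : Module.End k V)
    (hHE : H * E - E * H = (2:k) • E) : IsNilpotent E := by
  classical
  let K := AlgebraicClosure k
  haveI : CharZero K := charZero_of_injective_algebraMap (algebraMap k K).injective
  let b := Module.finBasis k V
  let φ := LinearMap.toMatrixAlgEquiv b
  let ψ := (algebraMap k K).mapMatrix (m := Fin (finrank k V))
  let χ := Matrix.toLinAlgEquiv' (n := Fin (finrank k V)) (R := K)
  set E' : Module.End K (Fin (finrank k V) → K) := χ (ψ (φ E)) with hE'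
  set H' : Module.End K (Fin (finrank k V) → K) := χ (ψ (φ H)) with hH'
  have hrel : H' * E' - E' * H' = (2:K) • E' := by
    have h0 : φ H * φ E - φ E * φ H = (2:k) • φ E := by
      rw [← map_mul, ← map_mul, ← map_sub, hHE, map_smul]
    have h1 : ψ (φ H) * ψ (φ E) - ψ (φ E) * ψ (φ H) = (2:K) • ψ (φ E) := by
      rw [← map_mul ψ (φ H) (φ E), ← map_mul ψ (φ E) (φ H), ← map_sub ψ, h0]
      have hsk : (2:k) • φ E = (2:ℕ) • φ E := by
        rw [← Nat.cast_smul_eq_nsmul k]; norm_num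
      have hsK : (2:K) • ψ (φ E) = (2:ℕ) • ψ (φ E) := by
        rw [← Nat.cast_smul_eq_nsmul K]; norm_num
      rw [hsk, map_nsmul, hsK]
    rw [hE', hH', ← map_mul χ, ← map_mul χ, ← map_sub χ, h1, map_smul]
  obtain ⟨M, hM⟩ := sl2_nilpotentE_aux E' H' hrel
  refine ⟨M, ?_⟩
  have h2 : χ (ψ (φ (E ^ M))) = 0 := by
    rw [map_pow, map_pow, map_pow, ← hE', hM]
  have h3 : ψ (φ (E ^ M)) = 0 := by
    have := congrArg χ.symm h2
    simpa using this
  have h4 : φ (E ^ M) = 0 := by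
    ext i j
    have h6 : (ψ (φ (E ^ M))) i j = (0 : Matrix (Fin (finrank k V)) (Fin (finrank k V)) K) i j :=
      by rw [h3]
    rw [RingHom.mapMatrix_apply, Matrix.map_apply, Matrix.zero_apply] at h6
    rw [Matrix.zero_apply]
    exact (algebraMap k K).injective (by rw [map_zero]; exact h6)
  have := congrArg φ.symm h4
  simpa using this



end Nilpotency

section KerPow
variable {k V : Type*} [Field k] [AddCommGroup V] [Module k V]

/-- `ker E` is invariant under polynomials in `H`. -/
lemma sl2_ker_pow {E H : Module.End k V} (hHE : H * E - E * H = (2:k) • E) {x : V}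
    (hx : E x = 0) (c : k) : ∀ s : ℕ, E (((H - c • 1) ^ s) x) = 0 := by
  intro s
  induction s with
  | zero => simpa using hx
  | succ s ih =>
    rw [pow_succ', Module.End.mul_apply]
    exact sl2_ker_sub hHE c ih




end KerPow

universe u v

/-- Key lemma: for an `sl₂`-configuration of endomorphisms of a finite-dimensional space
over a char-zero field, `range E ⊔ ker F = ⊤`. -/
theorem sl2_key {k : Type u} [Field k] [CharZero k] :
    ∀ (d : ℕ) (V : Type v) [AddCommGroup V] [Module k V] [FiniteDimensional k V],
      finrank k V ≤ d → ∀ (E F H : Module.End k V),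
      E * F - F * E = H → H * E - E * H = (2:k) • E → H * F - F * H = -((2:k) • F) →
      LinearMap.range E ⊔ LinearMap.ker F = ⊤ := by
  intro d
  induction d with
  | zero =>
    intro V _ _ _ hd E F H _ _ _
    have hsub : Subsingleton V := by
      rw [← Module.finrank_zero_iff (R := k)]
      omega
    exact eq_top_iff.mpr (fun x _ => by rw [Subsingleton.elim x 0]; exact zero_mem _)
  | succ d ih =>
    intro V _ _ _ hd E F H hEF hHE hHF
    classical
    rcases Nat.eq_zero_or_pos (finrank k V) with hV0 | hVpos
    · have hsub : Subsingleton V := by rw [← Module.finrank_zero_iff (R := k)]; exact hV0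
      exact eq_top_iff.mpr (fun x _ => by rw [Subsingleton.elim x 0]; exact zero_mem _)
    haveI : Nontrivial V := Module.nontrivial_of_finrank_pos hVpos
    -- nilpotency of E and F
    have hnE : IsNilpotent E := sl2_nilpotentE E H hHE
    have hrelF : (-H) * F - F * (-H) = (2:k) • F := by
      rw [neg_mul, mul_neg, sub_neg_eq_add]
      have h9 : -(H * F) + F * H = -(H * F - F * H) := by abel
      rw [h9, hHF, neg_neg]
    have hnF : IsNilpotent F := sl2_nilpotentE F (-H) hrelF
    obtain ⟨NE, hNE⟩ := hnE
    obtain ⟨NF, hNF⟩ := hnF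
    -- a nonzero vector in `ker E`
    obtain ⟨w₀, hw₀0, hw₀E⟩ : ∃ w₀ : V, w₀ ≠ 0 ∧ E w₀ = 0 := by
      by_contra hcon
      push_neg at hcon
      have hinj : Function.Injective E := by
        rw [← LinearMap.ker_eq_bot]
        rw [Submodule.eq_bot_iff]
        intro x hx
        by_contra hx0
        exact (hcon x hx0) (LinearMap.mem_ker.mp hx)
      obtain ⟨x, hx⟩ := exists_ne (0 : V)
      apply hx
      have hinj' : Function.Injective (E ^ NE) := Module.End.iterate_injective hinj NE
      apply hinj'
      rw [hNE]; simp
    -- the set of natural eigenvalues of `H` on `ker E`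
    set A : Set ℕ := {i | i < NF ∧ ∃ v : V, v ≠ 0 ∧ E v = 0 ∧ H v = (i:k) • v} with hA
    have hbound : ∀ (c : k) (v : V), v ≠ 0 → E v = 0 → H v = c • v → ∃ i ∈ A, c = (i:k) := by
      intro c v hv0 hv1 hv2
      obtain ⟨i, hiN, hci⟩ := sl2_eigen_bound hEF hHE hHF hNF hv0 hv1 hv2
      exact ⟨i, ⟨hiN, v, hv0, hv1, hci ▸ hv2⟩, hci⟩
    have hAne : A.Nonempty := by
      have hP : sl2P H NF w₀ = 0 := by
        have h1 : (E ^ NF * F ^ NF) w₀ = 0 := by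
          rw [Module.End.mul_apply, hNF]; simp
        rw [sl2_prod hEF hHE hHF NF w₀ hw₀E] at h1
        exact (smul_eq_zero.mp h1).resolve_left
          (Nat.cast_ne_zero.mpr (Nat.factorial_ne_zero NF))
      obtain ⟨i, hiNF, v, hv⟩ := sl2_first_vanish hHE NF w₀ hw₀0 hw₀E hP
      exact ⟨i, hiNF, v, hv⟩
    have hAbdd : BddAbove A := ⟨NF, fun i hi => le_of_lt hi.1⟩
    set n := sSup A with hn
    obtain ⟨hnNF, v, hv0, hvE, hvH⟩ : n ∈ A := Nat.sSup_mem hAne hAbdd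
    have hmax : ∀ i ∈ A, i ≤ n := fun i hi => le_csSup hAbdd hi
    -- facts about the string through `v`
    have hgH : ∀ j : ℕ, H ((F^j) v) = ((n:k) - 2*j) • (F^j) v := by
      intro j
      have h1 := congrArg (fun T : Module.End k V => T v) (sl2_HFj hHF j)
      simp only [Module.End.mul_apply, LinearMap.sub_apply, LinearMap.smul_apply] at h1
      rw [hvH, map_smul] at h1
      rw [h1, sub_smul]
    have hgE : ∀ j : ℕ, E ((F^(j+1)) v) = (((j+1:ℕ):k) * ((n:k) - j)) • (F^j) v := by
      intro j
      have h1 := congrArg (fun T : Module.End k V => T v) (sl2_EFj hEF hHF j)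
      simp only [Module.End.mul_apply, LinearMap.add_apply, LinearMap.smul_apply,
        LinearMap.sub_apply, Module.End.one_apply] at h1
      rw [hvE, map_zero, hvH] at h1
      rw [h1, zero_add, map_sub, map_smul, map_smul, ← sub_smul, smul_smul]
    have hFtop : (F^(n+1)) v = 0 := by
      by_contra hne
      have hE0 : E ((F^(n+1)) v) = 0 := by
        rw [hgE n, sub_self, mul_zero, zero_smul]
      obtain ⟨i, hiA, hci⟩ := hbound _ _ hne hE0 (hgH (n+1))
      have hcast : ((i + n + 2 : ℕ) : k) = 0 := by push_cast; push_cast at hci; linear_combination -hci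
      have : i + n + 2 = 0 := Nat.cast_eq_zero.mp hcast
      omega
    have hFv : ∀ j : ℕ, n < j → (F^j) v = 0 := by
      intro j hj
      obtain ⟨m, rfl⟩ : ∃ m, j = m + (n+1) := ⟨j - (n+1), by omega⟩
      rw [pow_add, Module.End.mul_apply, hFtop, map_zero]
    -- the string submodule
    set g : Fin (n+1) → V := fun j => (F ^ (j:ℕ)) v with hg
    set U : Submodule k V := Submodule.span k (Set.range g) with hU
    have hgen_mem : ∀ j : ℕ, (F^j) v ∈ U := by
      intro j
      rcases le_or_gt j n with hj | hj
      · exact Submodule.subset_span ⟨⟨j, by omega⟩, rfl⟩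
      · rw [hFv j hj]; exact zero_mem _
    have hvU : v ∈ U := by simpa using hgen_mem 0
    have hUF : U ≤ U.comap F := by
      rw [hU, Submodule.span_le]
      rintro _ ⟨j, rfl⟩
      have hgj : F (g j) = (F^((j:ℕ)+1)) v := by
        rw [show g j = (F ^ (j:ℕ)) v from rfl, pow_succ', Module.End.mul_apply]
      simp only [SetLike.mem_coe, Submodule.mem_comap, hgj]
      exact hgen_mem _
    have hUE : U ≤ U.comap E := by
      rw [hU, Submodule.span_le]
      rintro _ ⟨j, rfl⟩
      simp only [SetLike.mem_coe, Submodule.mem_comap]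
      rcases Nat.eq_zero_or_pos (j:ℕ) with hj | hj
      · have hgj : g j = v := by rw [show g j = (F ^ (j:ℕ)) v from rfl, hj, pow_zero]; rfl
        rw [hgj, hvE]; exact zero_mem _
      · obtain ⟨m, hm⟩ : ∃ m, (j:ℕ) = m + 1 := ⟨(j:ℕ) - 1, by omega⟩
        have hgj : g j = (F^(m+1)) v := by rw [show g j = (F ^ (j:ℕ)) v from rfl, hm]
        rw [hgj, hgE m]
        exact Submodule.smul_mem _ _ (hgen_mem m)
    have hUH : U ≤ U.comap H := by
      rw [hU, Submodule.span_le]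
      rintro _ ⟨j, rfl⟩
      simp only [SetLike.mem_coe, Submodule.mem_comap]
      rw [show g j = (F ^ (j:ℕ)) v from rfl, hgH]
      exact Submodule.smul_mem _ _ (hgen_mem _)
    -- U is contained in the target
    have hUsub : U ≤ LinearMap.range E ⊔ LinearMap.ker F := by
      rw [hU, Submodule.span_le]
      rintro _ ⟨j, rfl⟩
      rcases eq_or_lt_of_le (Nat.lt_succ_iff.mp j.isLt) with hj | hj
      · apply Submodule.mem_sup_right
        rw [LinearMap.mem_ker, show g j = (F ^ (j:ℕ)) v from rfl,
          ← Module.End.mul_apply, ← pow_succ', hj]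
        exact hFtop
      · apply Submodule.mem_sup_left
        have hc : (((j:ℕ)+1:ℕ):k) * ((n:k) - (j:ℕ)) ≠ 0 := by
          apply mul_ne_zero
          · exact Nat.cast_ne_zero.mpr (Nat.succ_ne_zero _)
          · have : ((n:k) - ((j:ℕ):k)) = ((n - (j:ℕ) : ℕ) : k) := by
              rw [Nat.cast_sub (le_of_lt hj)]
            rw [this]
            exact Nat.cast_ne_zero.mpr (by omega)
        have h7 := hgE (j:ℕ)
        have hrange : E ((F^((j:ℕ)+1)) v) ∈ LinearMap.range E := ⟨_, rfl⟩
        rw [h7] at hrange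
        have h8 := Submodule.smul_mem _ ((((j:ℕ)+1:ℕ):k) * ((n:k) - (j:ℕ)))⁻¹ hrange
        rw [inv_smul_smul₀ hc] at h8
        exact h8
    -- quotient module
    haveI : Nontrivial U := ⟨⟨⟨v, hvU⟩, 0, by simp [hv0, Subtype.ext_iff]⟩⟩
    have hUpos : 0 < finrank k U := Module.finrank_pos
    have hQrank : finrank k (V ⧸ U) + finrank k U = finrank k V :=
      Submodule.finrank_quotient_add_finrank U
    set Eb := Submodule.mapQ U U E hUE with hEb
    set Fb := Submodule.mapQ U U F hUF with hFb
    set Hb := Submodule.mapQ U U H hUH with hHb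
    have hmkE : ∀ x : V, Eb (U.mkQ x) = U.mkQ (E x) := fun x => by
      rw [hEb, Submodule.mkQ_apply, Submodule.mkQ_apply, Submodule.mapQ_apply]
    have hmkF : ∀ x : V, Fb (U.mkQ x) = U.mkQ (F x) := fun x => by
      rw [hFb, Submodule.mkQ_apply, Submodule.mkQ_apply, Submodule.mapQ_apply]
    have hmkH : ∀ x : V, Hb (U.mkQ x) = U.mkQ (H x) := fun x => by
      rw [hHb, Submodule.mkQ_apply, Submodule.mkQ_apply, Submodule.mapQ_apply]
    have hq1 : Eb * Fb - Fb * Eb = Hb := by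
      apply Submodule.linearMap_qext
      ext x
      have := congrArg (fun T : Module.End k V => T x) hEF
      simp only [Module.End.mul_apply, LinearMap.sub_apply] at this ⊢
      simp only [LinearMap.comp_apply, LinearMap.sub_apply, Module.End.mul_apply]
      simp only [hmkE, hmkF, hmkH]
      rw [← map_sub, this]
    have hq2 : Hb * Eb - Eb * Hb = (2:k) • Eb := by
      apply Submodule.linearMap_qext
      ext x
      have := congrArg (fun T : Module.End k V => T x) hHE
      simp only [Module.End.mul_apply, LinearMap.sub_apply, LinearMap.smul_apply] at this ⊢
      simp only [LinearMap.comp_apply, LinearMap.sub_apply, Module.End.mul_apply,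
        LinearMap.smul_apply]
      simp only [hmkE, hmkH]
      rw [← map_sub, ← map_smul, this]
    have hq3 : Hb * Fb - Fb * Hb = -((2:k) • Fb) := by
      apply Submodule.linearMap_qext
      ext x
      have := congrArg (fun T : Module.End k V => T x) hHF
      simp only [Module.End.mul_apply, LinearMap.sub_apply, LinearMap.smul_apply,
        LinearMap.neg_apply] at this ⊢
      simp only [LinearMap.comp_apply, LinearMap.sub_apply, Module.End.mul_apply,
        LinearMap.smul_apply, LinearMap.neg_apply]
      simp only [hmkF, hmkH]
      rw [← map_sub, ← map_smul, ← map_neg, this]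
    have hQd : finrank k (V ⧸ U) ≤ d := by omega
    have hQtop := ih (V ⧸ U) hQd Eb Fb Hb hq1 hq2 hq3
    -- claim C: anything whose F-image lies in U is in the target
    have claimC : ∀ s : V, F s ∈ U → s ∈ LinearMap.range E ⊔ LinearMap.ker F := by
      intro s hs
      rw [hU, Submodule.mem_span_range_iff_exists_fun] at hs
      obtain ⟨a, hsum⟩ := hs
      set t : V := ∑ j : Fin n, a j.succ • (F ^ ((j : ℕ))) v with ht
      have htU : t ∈ U := Submodule.sum_mem _ (fun j _ => Submodule.smul_mem _ _ (hgen_mem _))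
      have hFt : F t = ∑ j : Fin n, a j.succ • (F ^ ((j:ℕ)+1)) v := by
        rw [ht, map_sum]
        refine Finset.sum_congr rfl (fun j _ => ?_)
        rw [map_smul, ← Module.End.mul_apply, ← pow_succ']
      have hFst : F (s - t) = a 0 • v := by
        rw [map_sub, ← hsum, hFt, Fin.sum_univ_succ]
        have hg0 : g 0 = v := by
          rw [show g 0 = (F ^ ((0 : Fin (n+1)):ℕ)) v from rfl]; simp
        have hgs : ∀ j : Fin n, g j.succ = (F ^ ((j:ℕ)+1)) v := fun j => by
          rw [show g j.succ = (F ^ ((j.succ : Fin (n+1)):ℕ)) v from rfl, Fin.val_succ]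
        rw [hg0]
        simp only [hgs]
        abel
      rcases eq_or_ne (a 0) 0 with ha | ha
      · have h1 : s = t + (s - t) := by abel
        rw [h1]
        exact Submodule.add_mem _ (hUsub htU)
          (Submodule.mem_sup_right (LinearMap.mem_ker.mpr (by rw [hFst, ha, zero_smul])))
      · exfalso
        set s₂ := s - t with hs₂
        set G : Module.End k V := H - ((n:k) + 2) • 1 with hG
        have fit := LinearMap.isCompl_iSup_ker_pow_iInf_range_pow G
        have hs₂mem : s₂ ∈ (⨆ r : ℕ, LinearMap.ker (G ^ r)) ⊔ (⨅ r : ℕ, LinearMap.range (G ^ r)) := by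
          rw [fit.sup_eq_top]; exact Submodule.mem_top
        obtain ⟨p, hp, q, hq, hpq⟩ := Submodule.mem_sup.mp hs₂mem
        have hmono : Monotone (fun r : ℕ => LinearMap.ker (G ^ r)) := by
          intro r r' hrr' x hx
          rw [LinearMap.mem_ker] at hx ⊢
          obtain ⟨m, rfl⟩ : ∃ m, r' = m + r := ⟨r' - r, by omega⟩
          rw [pow_add, Module.End.mul_apply, hx, map_zero]
        obtain ⟨r₀, hr₀⟩ : ∃ r, (G ^ r) p = 0 := by
          obtain ⟨r, hr⟩ := (Submodule.mem_iSup_of_directed _ hmono.directed_le).mp hp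
          exact ⟨r, LinearMap.mem_ker.mp hr⟩
        have hshift : (H - (n:k) • 1) ^ r₀ * F = F * G ^ r₀ := by
          have h2 := sl2_shiftF hHF ((n:k) + 2) r₀
          rw [add_sub_cancel_right] at h2
          rw [h2, hG]
        have hFp : ((H - (n:k) • 1) ^ r₀) (F p) = 0 := by
          have h3 := congrArg (fun T : Module.End k V => T p) hshift
          simp only [Module.End.mul_apply] at h3
          rw [h3, hr₀, map_zero]
        have hFq : F q ∈ ⨅ r : ℕ, LinearMap.range ((H - (n:k) • 1) ^ r) := by
          rw [Submodule.mem_iInf]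
          intro r
          obtain ⟨y, hy⟩ := (Submodule.mem_iInf _).mp hq r
          refine ⟨F y, ?_⟩
          have h4 := sl2_shiftF hHF ((n:k) + 2) r
          rw [add_sub_cancel_right] at h4
          have h5 := congrArg (fun T : Module.End k V => T y) h4
          simp only [Module.End.mul_apply] at h5
          rw [h5, ← hG, hy]
        have hvker : a 0 • v - F p ∈ ⨆ r : ℕ, LinearMap.ker ((H - (n:k) • 1) ^ r) := by
          apply Submodule.sub_mem
          · apply Submodule.mem_iSup_of_mem 1
            rw [LinearMap.mem_ker, pow_one, map_smul, LinearMap.sub_apply, hvH,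
              LinearMap.smul_apply, Module.End.one_apply, sub_self, smul_zero]
          · exact Submodule.mem_iSup_of_mem r₀ (LinearMap.mem_ker.mpr hFp)
        have heq : F q = a 0 • v - F p := by
          have h6 : F p + F q = a 0 • v := by
            rw [← map_add, hpq]
            exact hFst
          exact eq_sub_of_add_eq' h6
        have fit2 := LinearMap.isCompl_iSup_ker_pow_iInf_range_pow (H - (n:k) • 1)
        have hFq0 : F q = 0 :=
          Submodule.disjoint_def.mp fit2.disjoint (F q) (heq ▸ hvker) hFq
        have hFpv : F p = a 0 • v := by
          rw [hFq0] at heq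
          have h7 := sub_eq_zero.mp heq.symm
          exact h7.symm
        have hp0 : p ≠ 0 := by
          intro h
          rw [h, map_zero] at hFpv
          exact ha ((smul_eq_zero.mp hFpv.symm).resolve_right hv0)
        have hex2 : ∃ m, (E ^ (m+1)) p = 0 := by
          refine ⟨NE, ?_⟩
          rw [pow_succ', Module.End.mul_apply, show (E ^ NE) p = 0 from by rw [hNE]; rfl, map_zero]
        set m₀ := Nat.find hex2 with hm₀
        have hEm1 : (E ^ (m₀+1)) p = 0 := Nat.find_spec hex2
        have hEm0 : (E ^ m₀) p ≠ 0 := by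
          rcases Nat.eq_zero_or_pos m₀ with h | h
          · rw [h, pow_zero]; simpa using hp0
          · obtain ⟨m₁, hm₁⟩ : ∃ m₁, m₀ = m₁ + 1 := ⟨m₀ - 1, by omega⟩
            rw [hm₁]
            exact Nat.find_min hex2 (by omega)
        set u := (E ^ m₀) p with hu
        have hEu : E u = 0 := by rw [hu, ← Module.End.mul_apply, ← pow_succ']; exact hEm1
        have hugen : ((H - (((n:k)+2) + 2*(m₀:ℕ)) • 1) ^ r₀) u = 0 := by
          have h8 := congrArg (fun T : Module.End k V => T p) (sl2_shiftEm hHE ((n:k)+2) r₀ m₀)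
          simp only [Module.End.mul_apply] at h8
          rw [hu, h8, ← hG, hr₀, map_zero]
        obtain ⟨s₃, hs₃0, hs₃1⟩ := sl2_eigen_of_gen hEm0 hugen
        obtain ⟨i, hiA, hci⟩ := hbound _ _ hs₃0 (sl2_ker_pow hHE hEu _ s₃) hs₃1
        have hcast : ((n + 2 + 2*m₀ : ℕ) : k) = (i:k) := by
          push_cast at hci ⊢
          linear_combination hci
        have h10 : n + 2 + 2*m₀ = i := Nat.cast_injective hcast
        have h11 := hmax i hiA
        omega
    -- finish
    rw [eq_top_iff]
    rintro x -
    have hx : (U.mkQ x) ∈ LinearMap.range Eb ⊔ LinearMap.ker Fb := by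
      rw [hQtop]; exact Submodule.mem_top
    obtain ⟨aq, haq, bq, hbq, habq⟩ := Submodule.mem_sup.mp hx
    obtain ⟨ya, hya⟩ := haq
    obtain ⟨y, rfl⟩ := Submodule.mkQ_surjective U ya
    set z := x - E y with hz
    have hbz : U.mkQ z = bq := by
      rw [hz, map_sub, ← habq, ← hmkE, hya]
      abel
    have hFz : F z ∈ U := by
      have h9 : Fb (U.mkQ z) = 0 := by rw [hbz]; exact LinearMap.mem_ker.mp hbq
      rw [hmkF, Submodule.mkQ_apply, Submodule.Quotient.mk_eq_zero] at h9
      exact h9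
    have hzmem := claimC z hFz
    have hxy : x = E y + z := by rw [hz]; abel
    rw [hxy]
    exact Submodule.add_mem _ (Submodule.mem_sup_left ⟨y, rfl⟩) hzmem

attribute [local instance 100] LieRing.ofAssociativeRing

/-- For an `sl₂`-triple `(e, h, f)` in a finite-dimensional Lie algebra `g` over a field
of characteristic 0, the range of `ad e` and the kernel of `ad f` (the centralizer of `f`)
are complementary linear subspaces: `g = [e, g] ⊕ z_g(f)`. -/
theorem stmt_13 (k : Type*) (g : Type*) [Field k] [CharZero k]
    [LieRing g] [LieAlgebra k g] [FiniteDimensional k g]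
    (e h f : g) (hne : e ≠ 0)
    (hhe : ⁅h, e⁆ = (2 : k) • e) (hhf : ⁅h, f⁆ = -((2 : k) • f)) (hef : ⁅e, f⁆ = h) :
    IsCompl (LinearMap.range (LieAlgebra.ad k g e)) (LinearMap.ker (LieAlgebra.ad k g f)) := by
  set E : Module.End k g := LieAlgebra.ad k g e with hE
  set F : Module.End k g := LieAlgebra.ad k g f with hF
  set H : Module.End k g := LieAlgebra.ad k g h with hH
  have hEF : E * F - F * E = H := by
    have h1 := (LieAlgebra.ad k g).map_lie e f
    rw [hef] at h1
    rw [← Ring.lie_def]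
    exact h1.symm
  have hHE : H * E - E * H = (2:k) • E := by
    have h1 := (LieAlgebra.ad k g).map_lie h e
    rw [hhe, map_smul] at h1
    rw [← Ring.lie_def]
    exact h1.symm
  have hHF : H * F - F * H = -((2:k) • F) := by
    have h1 := (LieAlgebra.ad k g).map_lie h f
    rw [hhf] at h1
    have h2 : LieAlgebra.ad k g (-((2:k) • f)) = -((2:k) • F) := by
      rw [map_neg, map_smul]
    rw [h2] at h1
    rw [← Ring.lie_def]
    exact h1.symm
  have hEF' : F * E - E * F = -H := by
    rw [← hEF]; abel
  have hHE' : (-H) * F - F * (-H) = (2:k) • F := by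
    rw [neg_mul, mul_neg, sub_neg_eq_add]
    have h9 : -(H * F) + F * H = -(H * F - F * H) := by abel
    rw [h9, hHF, neg_neg]
  have hHF' : (-H) * E - E * (-H) = -((2:k) • E) := by
    rw [neg_mul, mul_neg, sub_neg_eq_add]
    have h9 : -(H * E) + E * H = -(H * E - E * H) := by abel
    rw [h9, hHE]
  have h1 := sl2_key (finrank k g) g le_rfl E F H hEF hHE hHF
  have h2 := sl2_key (finrank k g) g le_rfl F E (-H) hEF' hHE' hHF'
  have c1 := LinearMap.finrank_range_add_finrank_ker E
  have c2 := LinearMap.finrank_range_add_finrank_ker F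
  have s1 := Submodule.finrank_sup_add_finrank_inf_eq (LinearMap.range E) (LinearMap.ker F)
  have s2 := Submodule.finrank_sup_add_finrank_inf_eq (LinearMap.range F) (LinearMap.ker E)
  rw [h1, finrank_top] at s1
  rw [h2, finrank_top] at s2
  have hinf : finrank k ↥(LinearMap.range E ⊓ LinearMap.ker F) = 0 := by omega
  have hbot : LinearMap.range E ⊓ LinearMap.ker F = ⊥ := Submodule.finrank_eq_zero.mp hinf
  exact ⟨disjoint_iff.mpr hbot, codisjoint_iff.mpr h1⟩
end

section
/- Let g be a finite-dimensional Lie algebra over a field of characteristic 0 whose Killing form κ is nondegenerate, and let (e, h, f) be an sl₂-triple in g. Let g(−1) := {x ∈ g : [h, x] = −x} be the (−1)-eigenspace of ad(h). Then the alternating bilinear form ω_χ on g(−1) defined by ω_χ(ξ, η) := κ(e, [ξ, η]) is nondegenerate; that is, (g(−1), ω_χ) is a symplectic vector space. -/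
open LieAlgebra LieModule Module

section Aux

variable {k g : Type*} [Field k] [CharZero k]
    [LieRing g] [LieAlgebra k g] [FiniteDimensional k g]
    {e h f : g}

private lemma chainE (hhe : ⁅h, e⁆ = (2 : k) • e) (μ : k) (v w : g)
    (hv : ⁅h, v⁆ = μ • v + w) (s : ℕ) :
    ⁅h, ((ad k g e) ^ s) v⁆ = (μ + 2 * s) • ((ad k g e) ^ s) v + ((ad k g e) ^ s) w := by
  induction s with
  | zero => simpa using hv
  | succ s ih =>
    have hE : ∀ u : g, ((ad k g e) ^ (s + 1)) u = ⁅e, ((ad k g e) ^ s) u⁆ := by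
      intro u; rw [pow_succ', Module.End.mul_apply]; rfl
    rw [hE v, hE w, leibniz_lie h e, hhe, ih, lie_add, lie_smul, smul_lie]
    push_cast
    match_scalars <;> ring

private lemma chainF (hhf : ⁅h, f⁆ = -((2 : k) • f)) (μ : k) (v w : g)
    (hv : ⁅h, v⁆ = μ • v + w) (s : ℕ) :
    ⁅h, ((ad k g f) ^ s) v⁆ = (μ - 2 * s) • ((ad k g f) ^ s) v + ((ad k g f) ^ s) w := by
  induction s with
  | zero => simpa using hv
  | succ s ih =>
    have hF : ∀ u : g, ((ad k g f) ^ (s + 1)) u = ⁅f, ((ad k g f) ^ s) u⁆ := by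
      intro u; rw [pow_succ', Module.End.mul_apply]; rfl
    rw [hF v, hF w, leibniz_lie h f, hhf, ih]
    simp only [neg_lie, smul_lie, lie_add, lie_smul, neg_smul]
    push_cast
    match_scalars <;> ring

private lemma chainEF (hhf : ⁅h, f⁆ = -((2 : k) • f)) (hef : ⁅e, f⁆ = h) (μ : k) (v w : g)
    (hv : ⁅h, v⁆ = μ • v + w) (s : ℕ) :
    ⁅e, ((ad k g f) ^ (s + 1)) v⁆ =
      ((ad k g f) ^ (s + 1)) ⁅e, v⁆ + (((s : k) + 1) * (μ - s)) • ((ad k g f) ^ s) v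
        + ((s : k) + 1) • ((ad k g f) ^ s) w := by
  have hF : ∀ (j : ℕ) (u : g), ((ad k g f) ^ (j + 1)) u = ⁅f, ((ad k g f) ^ j) u⁆ := by
    intro j u; rw [pow_succ', Module.End.mul_apply]; rfl
  induction s with
  | zero =>
    simp only [pow_zero, Module.End.one_apply, pow_one] at *
    have h1 : (ad k g f) v = ⁅f, v⁆ := rfl
    have h2 : (ad k g f) ⁅e, v⁆ = ⁅f, ⁅e, v⁆⁆ := rfl
    rw [hF 0 v]
    simp only [pow_zero, Module.End.one_apply]
    rw [leibniz_lie e f, hef, hv, hF 0 ⁅e, v⁆]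
    simp only [pow_zero, Module.End.one_apply]
    push_cast
    module
  | succ s ih =>
    rw [hF (s + 1) v, leibniz_lie e f, hef, chainF hhf μ v w hv (s + 1), ih, hF (s + 1) ⁅e, v⁆,
      hF s v, hF s w]
    simp only [lie_add, lie_smul]
    push_cast
    match_scalars <;> ring



set_option maxHeartbeats 1000000 in
/-- Existence of `ad e`-preimages of weight vectors of positive integer weight. -/
private lemma surjE (hhe : ⁅h, e⁆ = (2 : k) • e) (hhf : ⁅h, f⁆ = -((2 : k) • f))
    (hef : ⁅e, f⁆ = h) (lam : ℕ) (hlam : lam ≠ 0) (p : g)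
    (hp : ⁅h, p⁆ = (lam : k) • p) (t : ℕ) (ht : ((ad k g e) ^ (t + 1)) p = 0) :
    ∃ q : g, ⁅h, q⁆ = ((lam : k) - 2) • q ∧ ⁅e, q⁆ = p := by
  have hp' : ⁅h, p⁆ = (lam : k) • p + 0 := by simpa using hp
  have hlamk : (lam : k) ≠ 0 := Nat.cast_ne_zero.mpr hlam
  have key : ∀ s : ℕ, ∃ (q : g) (c : k), ⁅h, q⁆ = ((lam : k) - 2) • q ∧
      ⁅e, q⁆ = p + c • ((ad k g f) ^ (s + 1)) (((ad k g e) ^ (s + 1)) p) := by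
    intro s
    induction s with
    | zero =>
      refine ⟨(lam : k)⁻¹ • ⁅f, p⁆, (lam : k)⁻¹, ?_, ?_⟩
      · rw [lie_smul, leibniz_lie h f, hhf, hp]
        simp only [neg_lie, smul_lie, lie_smul]
        module
      · have h0 := chainEF hhf hef (lam : k) p 0 hp' 0
        simp only [zero_add, pow_one, pow_zero, Module.End.one_apply, Nat.cast_zero, sub_zero,
          one_mul, smul_zero, add_zero, one_smul, ad_apply] at h0
        rw [lie_smul, h0]
        simp only [zero_add, pow_one, ad_apply]
        rw [smul_add, smul_smul, inv_mul_cancel₀ hlamk, one_smul, add_comm]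
    | succ s ih =>
      obtain ⟨q, c, hq1, hq2⟩ := ih
      have hv : ⁅h, ((ad k g e) ^ (s + 1)) p⁆ =
          ((lam : k) + 2 * ((s : k) + 1)) • ((ad k g e) ^ (s + 1)) p + 0 := by
        have := chainE hhe (lam : k) p 0 hp' (s + 1)
        rw [this, map_zero]
        push_cast
        ring_nf
      have hEF := chainEF hhf hef ((lam : k) + 2 * ((s : k) + 1)) (((ad k g e) ^ (s + 1)) p) 0
        hv (s + 1)
      set D : k := (((s : k) + 1) + 1) * (((lam : k) + 2 * ((s : k) + 1)) - ((s : k) + 1))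
        with hD_def
      have hD : D ≠ 0 := by
        have h1 : ((s : k) + 1) + 1 ≠ 0 := by
          have : (((s + 2 : ℕ)) : k) ≠ 0 := Nat.cast_ne_zero.mpr (by omega)
          push_cast at this
          intro hcon; apply this; linear_combination hcon
        have h2 : ((lam : k) + 2 * ((s : k) + 1)) - ((s : k) + 1) ≠ 0 := by
          have : (((lam + s + 1 : ℕ)) : k) ≠ 0 := Nat.cast_ne_zero.mpr (by omega)
          push_cast at this
          intro hcon; apply this; linear_combination hcon
        exact mul_ne_zero h1 h2
      have hcoef : (((s + 1 : ℕ) : k) + 1) * ((((lam : k) + 2 * ((s : k) + 1))) - ((s + 1 : ℕ) : k))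
          = D := by push_cast; ring
      have hev : ⁅e, ((ad k g e) ^ (s + 1)) p⁆ = ((ad k g e) ^ (s + 1 + 1)) p := by
        rw [show ⁅e, ((ad k g e) ^ (s + 1)) p⁆ = ((ad k g e) * (ad k g e) ^ (s + 1)) p from rfl,
          ← pow_succ']
      rw [hev, hcoef, map_zero, smul_zero, add_zero] at hEF
      refine ⟨q + (-c / D) • ((ad k g f) ^ (s + 1 + 1)) (((ad k g e) ^ (s + 1)) p), -c / D,
        ?_, ?_⟩
      · have hwt := chainF hhf ((lam : k) + 2 * ((s : k) + 1)) (((ad k g e) ^ (s + 1)) p) 0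
          hv (s + 1 + 1)
        rw [map_zero, add_zero] at hwt
        have harith : ((lam : k) + 2 * ((s : k) + 1)) - 2 * ((s + 1 + 1 : ℕ) : k)
            = (lam : k) - 2 := by push_cast; ring
        rw [lie_add, hq1, lie_smul, hwt, harith]
        module
      · rw [lie_add, hq2, lie_smul, hEF, smul_add, smul_smul, div_mul_cancel₀ _ hD]
        module
  obtain ⟨q, c, hq1, hq2⟩ := key t
  exact ⟨q, hq1, by rw [hq2, ht, map_zero, smul_zero, add_zero]⟩

/-- Nonzero families of `ad h`-eigenvectors with distinct eigenvalues can't be infinite. -/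
private lemma chain_vanish (v : ℕ → g) (μ : ℕ → k) (hinj : Function.Injective μ)
    (hv : ∀ j, ⁅h, v j⁆ = μ j • v j) : ∃ j, v j = 0 := by
  by_contra hc
  push_neg at hc
  have hli : LinearIndependent k v :=
    (ad k g h).eigenvectors_linearIndependent' μ hinj v fun j =>
      Module.End.hasEigenvector_iff.mpr
        ⟨Module.End.mem_eigenspace_iff.mpr (by rw [ad_apply]; exact hv j), hc j⟩
  exact Module.Finite.not_linearIndependent_of_infinite v hli

set_option maxHeartbeats 1000000 in
/-- `ker (ad h + 1) ∩ range (ad h + 1) = 0`: there is no Jordan block of `ad h` at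
eigenvalue `-1`. -/
private lemma noJordan (hne : e ≠ 0) (hhe : ⁅h, e⁆ = (2 : k) • e)
    (hhf : ⁅h, f⁆ = -((2 : k) • f)) (hef : ⁅e, f⁆ = h) (w z : g)
    (hw : ⁅h, w⁆ = -w) (hz : ⁅h, z⁆ + z = w) : w = 0 := by
  classical
  by_contra hwne
  have hEapp : ∀ (j : ℕ) (u : g), ((ad k g e) ^ (j + 1)) u = ⁅e, ((ad k g e) ^ j) u⁆ := by
    intro j u; rw [pow_succ', Module.End.mul_apply]; rfl
  have hFapp : ∀ (j : ℕ) (u : g), ((ad k g f) ^ (j + 1)) u = ⁅f, ((ad k g f) ^ j) u⁆ := by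
    intro j u; rw [pow_succ', Module.End.mul_apply]; rfl
  have hw' : ⁅h, w⁆ = (-1 : k) • w + 0 := by rw [hw]; module
  have hwchain : ∀ j : ℕ, ⁅h, ((ad k g e) ^ j) w⁆ = ((-1 : k) + 2 * j) • ((ad k g e) ^ j) w := by
    intro j
    have := chainE hhe (-1 : k) w 0 hw' j
    rwa [map_zero, add_zero] at this
  have hinj1 : ∀ c : k, Function.Injective (fun j : ℕ => c + 2 * (j : k)) := by
    intro c a b hab
    simp only at hab
    have : (a : k) = b := by linear_combination hab / 2
    exact_mod_cast this
  have hinj2 : ∀ c : k, Function.Injective (fun j : ℕ => c - 2 * (j : k)) := by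
    intro c a b hab
    simp only at hab
    have : (a : k) = b := by linear_combination hab / (-2)
    exact_mod_cast this
  -- minimal r with `(ad e)^(r+1) w = 0`
  have hex : ∃ j, ((ad k g e) ^ j) w = 0 :=
    chain_vanish (fun j => ((ad k g e) ^ j) w) (fun j => (-1 : k) + 2 * j) (hinj1 _) hwchain
  have hr0 : Nat.find hex ≠ 0 := by
    intro h0
    have := Nat.find_spec hex
    rw [h0, pow_zero, Module.End.one_apply] at this
    exact hwne this
  obtain ⟨r, hr⟩ : ∃ r, Nat.find hex = r + 1 := ⟨Nat.find hex - 1, by omega⟩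
  have hm_ne : ((ad k g e) ^ r) w ≠ 0 := Nat.find_min hex (by omega)
  have hm_e : ⁅e, ((ad k g e) ^ r) w⁆ = 0 := by
    rw [← hEapp r w, ← hr]; exact Nat.find_spec hex
  set m : g := ((ad k g e) ^ r) w with hm_def
  -- the sl2 triple and the primitive vector m
  have triple : IsSl2Triple h e f := by
    refine ⟨?_, hef, by rw [hhe, two_smul, two_smul], by rw [hhf, two_smul, two_smul]⟩
    intro h0
    rw [h0, zero_lie] at hhe
    exact hne (by simpa [eq_comm, smul_eq_zero] using hhe)
  have P : triple.HasPrimitiveVectorWith m ((-1 : k) + 2 * r) := ⟨hm_ne, hwchain r, hm_e⟩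
  obtain ⟨n, hn⟩ := P.exists_nat
  -- the z-chain
  have hz' : ⁅h, z⁆ = (-1 : k) • z + w := by
    have := eq_sub_of_add_eq hz
    rw [this]; module
  have hzchain := chainE hhe (-1 : k) z w hz'
  have hEw0 : ∀ j : ℕ, ((ad k g e) ^ (r + 1 + j)) w = 0 := by
    intro j
    rw [show r + 1 + j = j + (r + 1) by omega, pow_add, Module.End.mul_apply, ← hr,
      Nat.find_spec hex, map_zero]
  set p : g := ((ad k g e) ^ (r + 1)) z with hp_def
  have hp : ⁅h, p⁆ = ((n + 2 : ℕ) : k) • p := by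
    have h1 := hzchain (r + 1)
    have h2 := hEw0 0
    rw [add_zero] at h2
    rw [h1, h2, add_zero]
    congr 1
    push_cast
    linear_combination hn
  -- vanishing of the p-chain
  have hpex : ∃ j, ((ad k g e) ^ (r + 1 + j)) z = 0 := by
    refine chain_vanish (h := h) (fun j => ((ad k g e) ^ (r + 1 + j)) z)
      (fun j => ((-1 : k) + 2 * (r + 1)) + 2 * j) (hinj1 _) ?_
    intro j
    have h1 := hzchain (r + 1 + j)
    rw [hEw0 j, add_zero] at h1
    rw [h1]
    congr 1
    push_cast
    ring
  obtain ⟨j, hj⟩ := hpex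
  have hjp : ((ad k g e) ^ (j + 1)) p = 0 := by
    have hjp0 : ((ad k g e) ^ j) p = 0 := by
      rw [hp_def, ← Module.End.mul_apply, ← pow_add, show j + (r + 1) = r + 1 + j by omega]
      exact hj
    rw [hEapp j p, hjp0, lie_zero]
  obtain ⟨q, hq1, hq2⟩ := surjE hhe hhf hef (n + 2) (by omega) p hp j hjp
  -- the Jordan-top pair (m, m')
  set m' : g := ((ad k g e) ^ r) z - q with hm'_def
  have hm'h : ⁅h, m'⁆ = (n : k) • m' + m := by
    have h1 := hzchain r
    have c1 : ((-1 : k) + 2 * r) = (n : k) := hn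
    have c2 : (((n + 2 : ℕ) : k)) - 2 = (n : k) := by push_cast; ring
    rw [hm'_def, lie_sub, h1, hq1, c1, c2, hm_def]
    module
  have hm'e : ⁅e, m'⁆ = 0 := by
    rw [hm'_def, lie_sub, hq2, ← hEapp r z, ← hp_def, sub_self]
  have hm'ne : m' ≠ 0 := by
    intro h0
    rw [h0, lie_zero, smul_zero, zero_add] at hm'h
    exact hm_ne hm'h.symm
  -- strings through m (primitive vector API)
  have hFm_eig : ∀ i : ℕ, ⁅h, ((ad k g f) ^ i) m⁆ = ((n : k) - 2 * i) • ((ad k g f) ^ i) m := by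
    intro i
    have := P.lie_h_pow_toEnd_f i
    rw [hn] at this
    exact this
  have hFm_zero : ((ad k g f) ^ (n + 1)) m = 0 := P.pow_toEnd_f_eq_zero_of_eq_nat hn
  have hFm_ne : ∀ i ≤ n, ((ad k g f) ^ i) m ≠ 0 := fun i hi =>
    P.pow_toEnd_f_ne_zero_of_eq_nat hn hi
  -- the m'-string
  have hFm' := chainF hhf (n : k) m' m hm'h
  have hexN : ∃ i, ((ad k g f) ^ (n + 1 + i)) m' = 0 := by
    refine chain_vanish (h := h) (fun i => ((ad k g f) ^ (n + 1 + i)) m')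
      (fun i => ((n : k) - 2 * (n + 1)) - 2 * i) (hinj2 _) ?_
    intro i
    have h1 := hFm' (n + 1 + i)
    have h2 : ((ad k g f) ^ (n + 1 + i)) m = 0 := by
      rw [show n + 1 + i = i + (n + 1) by omega, pow_add, Module.End.mul_apply, hFm_zero, map_zero]
    rw [h1, h2, add_zero]
    congr 1
    push_cast
    ring
  have hexN' : ∃ N, ((ad k g f) ^ N) m' = 0 := ⟨n + 1 + hexN.choose, hexN.choose_spec⟩
  have hN0 : Nat.find hexN' ≠ 0 := by
    intro h0
    have := Nat.find_spec hexN'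
    rw [h0, pow_zero, Module.End.one_apply] at this
    exact hm'ne this
  obtain ⟨s, hs⟩ : ∃ s, Nat.find hexN' = s + 1 := ⟨Nat.find hexN' - 1, by omega⟩
  have hmin : ((ad k g f) ^ s) m' ≠ 0 := Nat.find_min hexN' (by omega)
  have hEFm' := chainEF hhf hef (n : k) m' m hm'h s
  rw [hm'e, map_zero, zero_add, ← hs, Nat.find_spec hexN', lie_zero] at hEFm'
  -- divide by (s+1)
  have hs1 : ((s : k) + 1) ≠ 0 := by
    have : (((s + 1 : ℕ)) : k) ≠ 0 := Nat.cast_ne_zero.mpr (by omega)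
    push_cast at this
    exact this
  have key2 : ((n : k) - s) • ((ad k g f) ^ s) m' + ((ad k g f) ^ s) m = 0 := by
    have h0 : ((s : k) + 1) • (((n : k) - s) • ((ad k g f) ^ s) m' + ((ad k g f) ^ s) m)
        = 0 := by
      rw [smul_add, smul_smul, ← hEFm']
    exact (smul_eq_zero.mp h0).resolve_left hs1
  by_cases hsn : s = n
  · rw [hsn, sub_self, zero_smul, zero_add] at key2
    exact hFm_ne n le_rfl key2
  · have hc : (n : k) - s ≠ 0 := by
      rw [sub_ne_zero]
      intro hcon
      exact hsn (Nat.cast_injective hcon).symm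
    have hFsm' : ((ad k g f) ^ s) m' = -((n : k) - s)⁻¹ • ((ad k g f) ^ s) m := by
      have := eq_neg_of_add_eq_zero_left key2
      calc ((ad k g f) ^ s) m' = ((n : k) - s)⁻¹ • (((n : k) - s) • ((ad k g f) ^ s) m') := by
            rw [smul_smul, inv_mul_cancel₀ hc, one_smul]
        _ = -((n : k) - s)⁻¹ • ((ad k g f) ^ s) m := by rw [this]; module
    -- apply ⁅h, ·⁆ to both sides
    have hLHS := hFm' s
    have hRHS : ⁅h, -((n : k) - s)⁻¹ • ((ad k g f) ^ s) m⁆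
        = ((n : k) - 2 * s) • (-((n : k) - s)⁻¹ • ((ad k g f) ^ s) m) := by
      rw [lie_smul, hFm_eig s]
      module
    rw [hFsm'] at hLHS
    rw [hLHS, ← hFsm'] at hRHS
    -- hRHS : ((n:k) - 2s) • F^s m' + F^s m = ((n:k) - 2s) • F^s m'
    have hFsm0 : ((ad k g f) ^ s) m = 0 := by
      have := hRHS
      rwa [add_eq_left] at this
    rw [hFsm0, smul_zero] at hFsm'
    exact hmin hFsm'
end Aux

/-- Let `g` be a finite-dimensional Lie algebra over a field of characteristic 0 with
nondegenerate Killing form `κ`, and `(e, h, f)` an `sl₂`-triple in `g`. On the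
`(-1)`-eigenspace `g(-1)` of `ad h`, the form `ω_χ(ξ, η) = κ(e, ⁅ξ, η⁆)` is alternating
and nondegenerate, i.e. `(g(-1), ω_χ)` is a symplectic vector space. -/
theorem stmt_14 (k : Type*) (g : Type*) [Field k] [CharZero k]
    [LieRing g] [LieAlgebra k g] [FiniteDimensional k g]
    (hkill : (killingForm k g).Nondegenerate)
    (e h f : g) (hne : e ≠ 0)
    (hhe : ⁅h, e⁆ = (2 : k) • e) (hhf : ⁅h, f⁆ = -((2 : k) • f)) (hef : ⁅e, f⁆ = h) :
    (∀ x : g, ⁅h, x⁆ = -x → killingForm k g e ⁅x, x⁆ = 0) ∧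
    (∀ x : g, ⁅h, x⁆ = -x →
      (∀ y : g, ⁅h, y⁆ = -y → killingForm k g e ⁅x, y⁆ = 0) → x = 0) := by
  constructor
  · intro x _
    simp
  · intro x hx hxy
    have hu_wt : ⁅h, ⁅e, x⁆⁆ = ⁅e, x⁆ := by
      rw [leibniz_lie h e x, hhe, hx, smul_lie, lie_neg]
      module
    set T : Module.End k g := ad k g h + 1 with hT_def
    have hTapp : ∀ y : g, T y = ⁅h, y⁆ + y := by
      intro y
      simp [hT_def, ad_apply]
    have hdisj : Disjoint (LinearMap.ker T) (LinearMap.range T) := by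
      rw [Submodule.disjoint_def]
      rintro y hy ⟨c, rfl⟩
      have hy1 : ⁅h, T c⁆ = -(T c) := by
        have := LinearMap.mem_ker.mp hy
        rw [hTapp] at this
        exact eq_neg_of_add_eq_zero_left this
      exact noJordan hne hhe hhf hef (T c) c hy1 (hTapp c).symm
    have hsum : LinearMap.ker T ⊔ LinearMap.range T = ⊤ := by
      apply Submodule.eq_top_of_disjoint _ _ _ hdisj
      rw [add_comm]
      exact (LinearMap.finrank_range_add_finrank_ker T).ge
    have hu0 : ∀ y : g, killingForm k g ⁅e, x⁆ y = 0 := by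
      intro y
      have hy : y ∈ LinearMap.ker T ⊔ LinearMap.range T := by rw [hsum]; trivial
      obtain ⟨a, ha, b, hb, rfl⟩ := Submodule.mem_sup.mp hy
      obtain ⟨c, rfl⟩ := hb
      have h1 : killingForm k g ⁅e, x⁆ a = 0 := by
        have ha' : ⁅h, a⁆ = -a := by
          have := LinearMap.mem_ker.mp ha
          rw [hTapp] at this
          exact eq_neg_of_add_eq_zero_left this
        rw [LieModule.traceForm_apply_lie_apply]
        exact hxy a ha'
      have h2 : killingForm k g ⁅e, x⁆ (T c) = 0 := by
        have h3 := LieModule.traceForm_apply_lie_apply' (R := k) (L := g) (M := g) h ⁅e, x⁆ c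
        rw [hu_wt] at h3
        have h3' : killingForm k g ⁅e, x⁆ c = - (killingForm k g ⁅e, x⁆ ⁅h, c⁆) := h3
        rw [hTapp, map_add]
        have : killingForm k g ⁅e, x⁆ ⁅h, c⁆ = - killingForm k g ⁅e, x⁆ c := by
          linear_combination h3'
        rw [this]
        ring
      rw [map_add, h1, h2, add_zero]
    have hex0 : ⁅e, x⁆ = 0 := hkill.1 _ hu0
    by_contra hxne
    have triple : IsSl2Triple h e f := by
      refine ⟨?_, hef, by rw [hhe, two_smul, two_smul], by rw [hhf, two_smul, two_smul]⟩
      intro h0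
      rw [h0, zero_lie] at hhe
      exact hne (by simpa [eq_comm, smul_eq_zero] using hhe)
    have P : triple.HasPrimitiveVectorWith x (-1 : k) :=
      ⟨hxne, by rw [hx]; module, hex0⟩
    obtain ⟨n, hn⟩ := P.exists_nat
    have : ((n : k) + 1) = 0 := by linear_combination -hn
    exact Nat.cast_add_one_ne_zero n this
end

section
/- Let g be a finite-dimensional Lie algebra over a field of characteristic 0 whose Killing form κ is nondegenerate, and let (e, h, f) be an sl₂-triple in g. Set V := [f, g] (the range of ad(f)) and define ω(ξ, η) := κ(e, [ξ, η]) for ξ, η ∈ g. Then g = [f, g] ⊕ z_g(e), and the restriction of the alternating form ω to V is nondegenerate; that is, (V, ω) is a symplectic vector space. -/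
open LieAlgebra LinearMap Module

section Aux

variable {k g : Type*} [Field k] [CharZero k]
  [LieRing g] [LieAlgebra k g] [FiniteDimensional k g]

lemma auxHF (h f : g) (hhf : ⁅h, f⁆ = -((2 : k) • f)) (m : ℕ) (x : g) :
    ⁅h, ((ad k g f) ^ m) x⁆ =
      ((ad k g f) ^ m) ⁅h, x⁆ - (2 * (m : k)) • ((ad k g f) ^ m) x := by
  induction m generalizing x with
  | zero => simp
  | succ m ih =>
    have hbase : ∀ z : g, ⁅h, ⁅f, z⁆⁆ = ⁅f, ⁅h, z⁆⁆ - (2 : k) • ⁅f, z⁆ := by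
      intro z
      rw [leibniz_lie h f z, hhf, neg_lie, smul_lie]
      module
    simp only [pow_succ, Module.End.mul_apply, ad_apply]
    rw [ih, hbase, map_sub, map_smul]
    push_cast
    module


lemma auxEF (e h f : g) (hhf : ⁅h, f⁆ = -((2 : k) • f)) (hef : ⁅e, f⁆ = h)
    (m : ℕ) (x : g) :
    ⁅e, ((ad k g f) ^ (m + 1)) x⁆ =
      ((ad k g f) ^ (m + 1)) ⁅e, x⁆ + ((m : k) + 1) • ((ad k g f) ^ m) ⁅h, x⁆
        - ((m : k) * ((m : k) + 1)) • ((ad k g f) ^ m) x := by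
  induction m generalizing x with
  | zero =>
    simp only [zero_add, pow_one, pow_zero, Module.End.one_apply, ad_apply, Nat.cast_zero]
    rw [leibniz_lie e f x, hef]
    module
  | succ m ih =>
    have hbaseE : ∀ z : g, ⁅e, ⁅f, z⁆⁆ = ⁅f, ⁅e, z⁆⁆ + ⁅h, z⁆ := by
      intro z
      rw [leibniz_lie e f z, hef]
      abel
    have hbaseH : ∀ z : g, ⁅h, ⁅f, z⁆⁆ = ⁅f, ⁅h, z⁆⁆ - (2 : k) • ⁅f, z⁆ := by
      intro z
      rw [leibniz_lie h f z, hhf, neg_lie, smul_lie]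
      module
    have hp : ∀ (j : ℕ) (z : g), ((ad k g f) ^ (j + 1)) z = ((ad k g f) ^ j) ⁅f, z⁆ := by
      intro j z
      simp [pow_succ, Module.End.mul_apply]
    rw [hp (m + 1) x, ih ⁅f, x⁆, hbaseE, hbaseH]
    simp only [map_add, map_sub, map_smul]
    rw [← hp m x, ← hp m ⁅h, x⁆, ← hp (m+1) ⁅e,x⁆]
    push_cast
    module


lemma auxNil (h f : g) (hhf : ⁅h, f⁆ = -((2 : k) • f)) :
    ∃ n : ℕ, LinearMap.range ((ad k g f) ^ n) = ⊥ := by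
  obtain ⟨n, hn⟩ := Filter.eventually_atTop.mp (ad k g f).eventually_iInf_range_pow_eq
  refine ⟨n, ?_⟩
  set F := ad k g f with hFdef
  set W : Submodule k g := LinearMap.range (F ^ n) with hWdef
  have hW1 : LinearMap.range (F ^ (n + 1)) = W := by
    rw [hWdef, ← hn n le_rfl, hn (n + 1) (Nat.le_succ n)]
  have hp : ∀ (j : ℕ) (z : g), (F ^ (j + 1)) z = F ((F ^ j) z) := by
    intro j z
    rw [pow_succ', Module.End.mul_apply]
  have hFW : ∀ x ∈ W, F x ∈ W := by
    rintro x ⟨y, rfl⟩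
    rw [← hW1]
    exact ⟨y, hp n y⟩
  have hHW : ∀ x ∈ W, (ad k g h) x ∈ W := by
    rintro x ⟨y, rfl⟩
    have := auxHF h f hhf n y
    rw [ad_apply, this]
    exact W.sub_mem ⟨⁅h, y⁆, rfl⟩ (W.smul_mem _ ⟨y, rfl⟩)
  set Fw := F.restrict hFW with hFw
  set Hw := (ad k g h).restrict hHW with hHw
  have hsurj : Function.Surjective Fw := by
    rintro ⟨x, hx⟩
    rw [← hW1] at hx
    obtain ⟨y, rfl⟩ := hx
    refine ⟨⟨(F ^ n) y, ⟨y, rfl⟩⟩, ?_⟩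
    exact Subtype.ext (hp n y).symm
  have hinj : Function.Injective Fw := (LinearMap.injective_iff_surjective).mpr hsurj
  set eW : W ≃ₗ[k] W := LinearEquiv.ofBijective Fw ⟨hinj, hsurj⟩ with heW
  have hrel : ∀ v : W, Fw (Hw v) = Hw (Fw v) + (2 : k) • Fw v := by
    rintro ⟨v, hv⟩
    apply Subtype.ext
    simp only [hFw, hHw, Submodule.coe_add, SetLike.val_smul, LinearMap.restrict_coe_apply,
      hFdef, ad_apply]
    rw [leibniz_lie h f v, hhf, neg_lie, smul_lie]
    module
  have hconj : eW.conj Hw = Hw + (2 : k) • (1 : Module.End k W) := by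
    ext v
    have h1 : Fw (eW.symm v) = v := eW.apply_symm_apply v
    rw [LinearEquiv.conj_apply]
    simp only [LinearMap.coe_comp, Function.comp_apply, LinearEquiv.coe_coe,
      LinearMap.add_apply, LinearMap.smul_apply, Module.End.one_apply]
    rw [show ∀ w : W, eW w = Fw w from fun w => rfl, hrel, h1]
  have htr := LinearMap.trace_conj' Hw eW
  rw [hconj] at htr
  simp only [map_add, map_smul, LinearMap.trace_one, smul_eq_mul] at htr
  have hfr : (2 : k) * (finrank k W : k) = 0 := by
    have := htr
    rw [add_eq_left] at this
    exact this
  have : (finrank k W : k) = 0 := by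
    have h2 : (2 : k) ≠ 0 := two_ne_zero
    exact (mul_eq_zero.mp hfr).resolve_left h2
  have : finrank k W = 0 := Nat.cast_eq_zero.mp this
  exact Submodule.finrank_eq_zero.mp this


lemma auxInj (e h f : g) (t : IsSl2Triple h e f) (j : ℕ) (hj : j ≠ 0) (v : g)
    (hv1 : ⁅e, v⁆ = 0) (hv2 : ⁅h, v⁆ = -((j : k) • v)) : v = 0 := by
  by_contra hne
  have P : t.HasPrimitiveVectorWith v (-(j : k)) :=
    { ne_zero := hne
      lie_h := by rw [hv2, neg_smul]
      lie_e := hv1 }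
  obtain ⟨m, hm⟩ := P.exists_nat
  have : ((m + j : ℕ) : k) = 0 := by
    push_cast
    rw [← hm]
    ring
  have : m + j = 0 := Nat.cast_eq_zero.mp this
  omega

lemma auxStep (e h f : g) (hhf : ⁅h, f⁆ = -((2 : k) • f)) (hef : ⁅e, f⁆ = h)
    (m : ℕ) (x : g) (hx : ⁅e, x⁆ = 0)
    (hmem : x ∈ LinearMap.range ((ad k g f) ^ (m + 1))) :
    ⁅h, x⁆ + ((m : k) + 2) • x ∈ LinearMap.range ((ad k g f) ^ (m + 2)) := by
  obtain ⟨y, rfl⟩ := hmem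
  set F := ad k g f with hFdef
  have hc : (m : k) + 1 ≠ 0 := by
    have : ((m + 1 : ℕ) : k) ≠ 0 := Nat.cast_ne_zero.mpr (Nat.succ_ne_zero m)
    push_cast at this
    exact this
  have hp : ∀ (j : ℕ) (z : g), (F ^ (j + 1)) z = F ((F ^ j) z) := by
    intro j z
    rw [pow_succ', Module.End.mul_apply]
  have h0 := auxEF e h f hhf hef m y
  rw [hx] at h0
  -- h0 : 0 = F^{m+1} ⁅e,y⁆ + (m+1) • F^m ⁅h,y⁆ - m(m+1) • F^m y   (after map_zero)
  have h0' : (F ^ (m + 1)) ⁅e, y⁆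
      = ((m : k) * ((m : k) + 1)) • (F ^ m) y - ((m : k) + 1) • (F ^ m) ⁅h, y⁆ := by
    have h0'' := h0.symm
    linear_combination (norm := module) h0''
  have hB := auxHF h f hhf (m + 1) y
  -- hB : ⁅h, F^{m+1} y⁆ = F^{m+1} ⁅h,y⁆ - 2(m+1) • F^{m+1} y
  have hA : (F ^ (m + 2)) ⁅e, y⁆
      = ((m : k) * ((m : k) + 1)) • (F ^ (m + 1)) y
        - ((m : k) + 1) • (F ^ (m + 1)) ⁅h, y⁆ := by
    have := congrArg F h0'
    rw [map_sub, map_smul, map_smul] at this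
    rw [show m + 2 = (m + 1) + 1 from rfl, hp (m + 1), this, ← hp m, ← hp m]
  refine ⟨(-(((m : k) + 1)⁻¹)) • ⁅e, y⁆, ?_⟩
  rw [map_smul, hA, hB]
  match_scalars <;> (push_cast; field_simp; try ring)


lemma auxDisj (e h f : g) (hne : e ≠ 0)
    (hhe : ⁅h, e⁆ = (2 : k) • e) (hhf : ⁅h, f⁆ = -((2 : k) • f)) (hef : ⁅e, f⁆ = h) :
    Disjoint (LinearMap.range (ad k g f)) (LinearMap.ker (ad k g e)) := by
  have hh : h ≠ 0 := by
    intro h0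
    rw [h0, zero_lie] at hhe
    rcases smul_eq_zero.mp hhe.symm with h2 | h2
    · exact two_ne_zero h2
    · exact hne h2
  have t : IsSl2Triple h e f := by
    refine ⟨hh, hef, ?_, ?_⟩
    · rw [hhe, ← Nat.cast_smul_eq_nsmul k]; norm_num
    · rw [hhf, ← Nat.cast_smul_eq_nsmul k]; norm_num
  rw [Submodule.disjoint_def]
  intro x hxr hxk
  rw [LinearMap.mem_ker, ad_apply] at hxk
  let u : ℕ → g := fun i => Nat.rec x (fun i xi => ⁅h, xi⁆ + ((i : k) + 2) • xi) i
  have huS : ∀ i, u (i + 1) = ⁅h, u i⁆ + ((i : k) + 2) • u i := fun i => rfl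
  have hinv : ∀ i, ⁅e, u i⁆ = 0 ∧ u i ∈ LinearMap.range ((ad k g f) ^ (i + 1)) := by
    intro i
    induction i with
    | zero =>
      refine ⟨hxk, ?_⟩
      show x ∈ LinearMap.range ((ad k g f) ^ (0 + 1))
      simpa [pow_one] using hxr
    | succ i ih =>
      obtain ⟨ih1, ih2⟩ := ih
      refine ⟨?_, ?_⟩
      · rw [huS i, lie_add, lie_smul, ih1, smul_zero, add_zero, leibniz_lie e h (u i), ih1,
          lie_zero, add_zero, ← lie_skew e h, hhe, neg_lie, smul_lie, ih1, smul_zero, neg_zero]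
      · have := auxStep e h f hhf hef i (u i) ih1 ih2
        rw [← huS i] at this
        exact this
  obtain ⟨n, hn⟩ := auxNil h f hhf
  have hun : u n = 0 := by
    obtain ⟨-, hmem⟩ := hinv n
    obtain ⟨y, hy⟩ := hmem
    have hmem2 : ((ad k g f) ^ n) ((ad k g f) y) ∈ LinearMap.range ((ad k g f) ^ n) := ⟨_, rfl⟩
    rw [hn] at hmem2
    rw [← hy, pow_succ, Module.End.mul_apply]
    simpa using hmem2
  have hdown : ∀ i, u i = 0 → x = 0 := by
    intro i
    induction i with
    | zero => exact fun h0 => h0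
    | succ i ih =>
      intro h0
      apply ih
      have h2 : ⁅h, u i⁆ + ((i : k) + 2) • u i = 0 := by rw [← huS i, h0]
      have h1 : ⁅h, u i⁆ = -((((i + 2 : ℕ)) : k) • u i) := by
        push_cast
        exact eq_neg_of_add_eq_zero_left h2
      exact auxInj e h f t (i + 2) (by omega) (u i) (hinv i).1 h1
  exact hdown n hun

end Aux

/-- Let `g` be a finite-dimensional Lie algebra over a field of characteristic 0 with
nondegenerate Killing form `κ`, and `(e, h, f)` an `sl₂`-triple in `g`. Then
`g = [f, g] ⊕ z_g(e)`, and the alternating form `ω(ξ, η) = κ(e, ⁅ξ, η⁆)` restricted to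
`V = [f, g]` (the range of `ad f`) is nondegenerate, i.e. `(V, ω)` is symplectic. -/
theorem stmt_15 (k : Type*) (g : Type*) [Field k] [CharZero k]
    [LieRing g] [LieAlgebra k g] [FiniteDimensional k g]
    (hkill : (killingForm k g).Nondegenerate)
    (e h f : g) (hne : e ≠ 0)
    (hhe : ⁅h, e⁆ = (2 : k) • e) (hhf : ⁅h, f⁆ = -((2 : k) • f)) (hef : ⁅e, f⁆ = h) :
    IsCompl (LinearMap.range (LieAlgebra.ad k g f)) (LinearMap.ker (LieAlgebra.ad k g e)) ∧
    (∀ x ∈ LinearMap.range (LieAlgebra.ad k g f),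
      (∀ y ∈ LinearMap.range (LieAlgebra.ad k g f), killingForm k g e ⁅x, y⁆ = 0) →
      x = 0) := by
  have hf0 : f ≠ 0 := by
    intro hf
    rw [hf, lie_zero] at hef
    rw [← hef, zero_lie] at hhe
    rcases smul_eq_zero.mp hhe.symm with h2 | h2
    · exact two_ne_zero h2
    · exact hne h2
  have d1 := auxDisj e h f hne hhe hhf hef
  have d2 : Disjoint (LinearMap.range (ad k g e)) (LinearMap.ker (ad k g f)) := by
    apply auxDisj f (-h) e hf0
    · rw [neg_lie, hhf, neg_neg]
    · rw [neg_lie, hhe]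
    · rw [← lie_skew f e, hef]
  have r1 := LinearMap.finrank_range_add_finrank_ker (ad k g f)
  have r2 := LinearMap.finrank_range_add_finrank_ker (ad k g e)
  have s1 := Submodule.finrank_add_finrank_le_of_disjoint d1
  have s2 := Submodule.finrank_add_finrank_le_of_disjoint d2
  have hsum : finrank k (LinearMap.range (ad k g f)) + finrank k (LinearMap.ker (ad k g e))
      = finrank k g := by omega
  have htop := Submodule.eq_top_of_disjoint _ _ hsum.ge d1
  have hcompl : IsCompl (LinearMap.range (ad k g f)) (LinearMap.ker (ad k g e)) :=
    ⟨d1, codisjoint_iff.mpr htop⟩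
  refine ⟨hcompl, ?_⟩
  intro x hx hperp
  have key : ⁅e, x⁆ = 0 := by
    apply hkill.1
    intro y
    have hy : y ∈ LinearMap.range (ad k g f) ⊔ LinearMap.ker (ad k g e) := by
      rw [htop]; trivial
    obtain ⟨y1, hy1, y2, hy2, rfl⟩ := Submodule.mem_sup.mp hy
    rw [map_add]
    have e1 : killingForm k g ⁅e, x⁆ y1 = killingForm k g e ⁅x, y1⁆ :=
      LieModule.traceForm_apply_lie_apply k g g e x y1
    have hz : ⁅e, y2⁆ = 0 := by
      rw [LinearMap.mem_ker] at hy2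
      rw [← ad_apply (R := k), hy2]
    have e2 : killingForm k g ⁅e, x⁆ y2 = 0 := by
      have h3 : killingForm k g ⁅x, e⁆ y2 = killingForm k g x ⁅e, y2⁆ :=
        LieModule.traceForm_apply_lie_apply k g g x e y2
      rw [← lie_skew e x, map_neg, LinearMap.neg_apply, h3, hz, map_zero, neg_zero]
    rw [e1, e2, hperp y1 hy1, add_zero]
  have hxk : x ∈ LinearMap.ker (ad k g e) := by
    rw [LinearMap.mem_ker, ad_apply]
    exact key
  exact Submodule.disjoint_def.mp d1 x hx hxk
end
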